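/- arXiv:2505.09736 — 2 statements merged into one kernel-verified Lean document; each statement's English description precedes it below -/
import Mathlib

section
/- Qvol equals Rvol: for any integral n-cycle X, the minimum L1-norm of a rational filling equals the minimum L1-norm of a real filling of X. -/
/-- Oriented `n`-simplices on vertex set `ℕ`, represented by their vertex sets
(of size `n+1`), with the orientation given by increasing order. -/
abbrev Simp (n : ℕ) : Type := {s : Finset ℕ // s.card = n + 1}

/-- Simplicial `n`-chains with coefficients in `R`. -/
abbrev GChain (R : Type) [CommRing R] (n : ℕ) : Type := Simp n →₀ R

/-- Integral simplicial `n`-chains. -/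
abbrev ZChain (n : ℕ) : Type := GChain ℤ n

/-- Boundary of a single oriented `(n+1)`-simplex. -/
noncomputable def simpBdry (R : Type) [CommRing R] {n : ℕ} (s : Simp (n + 1)) :
    GChain R n :=
  ∑ v ∈ (s : Finset ℕ).attach,
    ((-1 : R) ^ (((s : Finset ℕ).filter (· < (v : ℕ))).card)) •
      Finsupp.single
        ⟨(s : Finset ℕ).erase (v : ℕ), by
          have hv := v.2
          simp [Finset.card_erase_of_mem hv, s.2]⟩ 1

/-- The simplicial boundary operator. -/
noncomputable def bdry {R : Type} [CommRing R] {n : ℕ} (M : GChain R (n + 1)) :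
    GChain R n :=
  M.sum fun s c => c • simpBdry R s

/-- The `L¹`-norm of an integral chain. -/
noncomputable def znorm {n : ℕ} (M : ZChain n) : ℕ :=
  M.sum fun _ c => c.natAbs

/-- The set of vertices of simplices with nonzero coefficient. -/
noncomputable def vert {R : Type} [CommRing R] {n : ℕ} (M : GChain R n) : Finset ℕ :=
  M.support.sup fun s => (s : Finset ℕ)

/-- The chain is supported on simplices with vertices in `A`. -/
def suppOn {R : Type} [CommRing R] {n : ℕ} (A : Finset ℕ) (M : GChain R n) : Prop :=
  ∀ s ∈ M.support, (s : Finset ℕ) ⊆ A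

/-- Total multiplicity in `M` of simplices containing the vertex `x`. -/
noncomputable def zdeg {n : ℕ} (x : ℕ) (M : ZChain n) : ℕ :=
  M.sum fun s c => if x ∈ (s : Finset ℕ) then c.natAbs else 0

/-- Maximum vertex degree of an integral chain. -/
noncomputable def zmaxdeg {n : ℕ} (M : ZChain n) : ℕ :=
  (vert M).sup fun x => zdeg x M

/-- The cone from the vertex `x` over the chain `U`: each oriented simplex of `U`
gets `x` adjoined as a new first vertex; simplices already containing `x`
contribute `0`. -/
noncomputable def cone {n : ℕ} (x : ℕ) (U : ZChain n) : ZChain (n + 1) :=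
  U.sum fun s c =>
    if h : x ∈ (s : Finset ℕ) then 0
    else
      (((-1 : ℤ) ^ (((s : Finset ℕ).filter (· < x)).card)) * c) •
        Finsupp.single ⟨insert x (s : Finset ℕ), by
          simp [Finset.card_insert_of_notMem h, s.2]⟩ 1

/-- `Zvol X`: the minimal `L¹`-norm of an integral filling of `X`. -/
noncomputable def zvol {n : ℕ} (X : ZChain n) : ℕ :=
  sInf {m : ℕ | ∃ M : ZChain (n + 1), bdry M = X ∧ znorm M = m}

/-- A chain is taut if it is an optimal filling of its boundary. -/
def Taut {n : ℕ} (M : ZChain (n + 1)) : Prop :=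
  znorm M = zvol (bdry M)

/-- The `L¹`-norm of a chain with coefficients in a linear ordered field. -/
noncomputable def fnorm {K : Type} [Field K] [LinearOrder K] [IsStrictOrderedRing K] {n : ℕ} (M : GChain K n) : K :=
  M.sum fun _ c => |c|

/-- The minimal `L¹`-norm of a rational filling. -/
noncomputable def qvol {n : ℕ} (X : GChain ℚ n) : ℝ :=
  sInf {r : ℝ | ∃ M : GChain ℚ (n + 1), bdry M = X ∧ ((fnorm M : ℚ) : ℝ) = r}

/-- The minimal `L¹`-norm of a real filling. -/
noncomputable def rvol {n : ℕ} (X : GChain ℝ n) : ℝ :=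
  sInf {r : ℝ | ∃ M : GChain ℝ (n + 1), bdry M = X ∧ fnorm M = r}

/-- View an integral chain as a rational chain. -/
noncomputable def toQ {n : ℕ} (X : ZChain n) : GChain ℚ n :=
  X.mapRange Int.cast (by simp)

/-- View an integral chain as a real chain. -/
noncomputable def toR {n : ℕ} (X : ZChain n) : GChain ℝ n :=
  X.mapRange Int.cast (by simp)

/-- A rational chain is taut if it is an optimal rational filling of its
boundary. -/
def TautQ {n : ℕ} (M : GChain ℚ (n + 1)) : Prop :=
  ((fnorm M : ℚ) : ℝ) = qvol (bdry M)

namespace QRhelp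

noncomputable def qr {m : ℕ} (M : GChain ℚ m) : GChain ℝ m :=
  M.mapRange Rat.cast (by simp)

@[simp] lemma qr_apply {m : ℕ} (M : GChain ℚ m) (s : Simp m) : qr M s = (M s : ℝ) :=
  Finsupp.mapRange_apply

lemma qr_add {m : ℕ} (M N : GChain ℚ m) : qr (M + N) = qr M + qr N := by
  ext s; simp

@[simp] lemma qr_zero {m : ℕ} : qr (0 : GChain ℚ m) = 0 := by ext s; simp

lemma qr_smul {m : ℕ} (q : ℚ) (M : GChain ℚ m) : qr (q • M) = (q : ℝ) • qr M := by
  ext s; simp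

lemma qr_single {m : ℕ} (s : Simp m) (q : ℚ) :
    qr (Finsupp.single s q) = Finsupp.single s (q : ℝ) := by
  ext t; simp [Finsupp.single_apply, apply_ite (Rat.cast (K := ℝ))]

lemma qr_simpBdry {m : ℕ} (s : Simp (m + 1)) : qr (simpBdry ℚ s) = simpBdry ℝ s := by
  ext t
  simp only [simpBdry, Finsupp.finset_sum_apply, qr]
  rw [Finsupp.mapRange_apply, Finsupp.finset_sum_apply, Rat.cast_sum]
  refine Finset.sum_congr rfl fun v _ => ?_
  simp [Finsupp.single_apply, apply_ite (Rat.cast (K := ℝ))]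

lemma bdry_add {R : Type} [CommRing R] {m : ℕ} (M N : GChain R (m + 1)) :
    bdry (M + N) = bdry M + bdry N := by
  unfold bdry
  rw [Finsupp.sum_add_index]
  · intro s _; simp
  · intro s _ c d; exact add_smul c d _

@[simp] lemma bdry_zero {R : Type} [CommRing R] {m : ℕ} : bdry (0 : GChain R (m + 1)) = 0 :=
  Finsupp.sum_zero_index

lemma bdry_smul {R : Type} [CommRing R] {m : ℕ} (c : R) (M : GChain R (m + 1)) :
    bdry (c • M) = c • bdry M := by
  unfold bdry
  rw [Finsupp.sum_smul_index' (fun s => by simp), Finsupp.smul_sum]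
  refine Finsupp.sum_congr fun s _ => ?_
  rw [smul_eq_mul, mul_smul]

lemma bdry_qr {m : ℕ} (M : GChain ℚ (m + 1)) : bdry (qr M) = qr (bdry M) := by
  unfold bdry qr
  rw [Finsupp.sum_mapRange_index (fun s => by simp)]
  rw [show (Finsupp.mapRange Rat.cast (by simp) : GChain ℚ m → GChain ℝ m)
      = ⇑(Finsupp.mapRange.addMonoidHom (Rat.castHom ℝ).toAddMonoidHom) from rfl] 
  rw [map_finsuppSum]
  refine Finsupp.sum_congr fun s _ => ?_
  show ((M s : ℝ)) • simpBdry ℝ s = qr (M s • simpBdry ℚ s)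
  rw [qr_smul, qr_simpBdry]

end QRhelp

namespace QRhelp

lemma fnorm_eq_sum {K : Type} [Field K] [LinearOrder K] [IsStrictOrderedRing K] {m : ℕ} (M : GChain K m)
    {t : Finset (Simp m)} (h : M.support ⊆ t) : fnorm M = ∑ s ∈ t, |M s| := by
  unfold fnorm
  exact Finsupp.sum_of_support_subset M h _ (fun s _ => abs_zero)

lemma fnorm_nonneg {K : Type} [Field K] [LinearOrder K] [IsStrictOrderedRing K] {m : ℕ} (M : GChain K m) :
    0 ≤ fnorm M := by
  rw [fnorm_eq_sum M (Finset.Subset.refl _)]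
  exact Finset.sum_nonneg fun s _ => abs_nonneg _

lemma fnorm_add_le {K : Type} [Field K] [LinearOrder K] [IsStrictOrderedRing K] {m : ℕ} (M N : GChain K m) :
    fnorm (M + N) ≤ fnorm M + fnorm N := by
  rw [fnorm_eq_sum (M + N) (t := M.support ∪ N.support) (Finsupp.support_add),
    fnorm_eq_sum M (Finset.subset_union_left), fnorm_eq_sum N (Finset.subset_union_right),
    ← Finset.sum_add_distrib]
  exact Finset.sum_le_sum fun s _ => by simpa using abs_add_le (M s) (N s)

lemma fnorm_smul {K : Type} [Field K] [LinearOrder K] [IsStrictOrderedRing K] {m : ℕ} (c : K) (M : GChain K m) :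
    fnorm (c • M) = |c| * fnorm M := by
  rw [fnorm_eq_sum (c • M) (t := M.support) Finsupp.support_smul,
    fnorm_eq_sum M (Finset.Subset.refl _), Finset.mul_sum]
  exact Finset.sum_congr rfl fun s _ => by simp [abs_mul]

lemma fnorm_qr {m : ℕ} (M : GChain ℚ m) : fnorm (qr M) = ((fnorm M : ℚ) : ℝ) := by
  have hs : (qr M).support ⊆ M.support := Finsupp.support_mapRange
  rw [fnorm_eq_sum (qr M) hs, fnorm_eq_sum M (Finset.Subset.refl _)]
  push_cast
  exact Finset.sum_congr rfl fun s _ => by simp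

lemma fnorm_sum_le {K : Type} [Field K] [LinearOrder K] [IsStrictOrderedRing K] {m : ℕ} {ι : Type} (t : Finset ι)
    (f : ι → GChain K m) : fnorm (∑ j ∈ t, f j) ≤ ∑ j ∈ t, fnorm (f j) := by
  classical
  induction t using Finset.induction with
  | empty => simp [show fnorm (0 : GChain K m) = 0 by unfold fnorm; simp]
  | insert _ _ hj ih =>
    rw [Finset.sum_insert hj, Finset.sum_insert hj]
    exact le_trans (fnorm_add_le _ _) (by linarith)

end QRhelp

namespace QRhelp

lemma exists_decomp {m : ℕ} (M : GChain ℝ m) :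
    ∃ (ι : Type) (_ : Fintype ι) (w : ι → ℝ) (u : ι → GChain ℚ m) (j₀ : ι),
      LinearIndependent ℚ w ∧ w j₀ = 1 ∧ M = ∑ j, w j • qr (u j) := by
  classical
  set A : Set ℝ := insert 1 (↑(M.support.image M)) with hA
  have hAfin : A.Finite := Set.Finite.insert _ (Finset.finite_toSet _)
  set W : Submodule ℚ ℝ := Submodule.span ℚ A with hW
  haveI : FiniteDimensional ℚ W := FiniteDimensional.span_of_finite ℚ hAfin
  have h1 : (1 : ℝ) ∈ W := Submodule.subset_span (Set.mem_insert _ _)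
  have hMs : ∀ s, M s ∈ W := by
    intro s
    by_cases hs : s ∈ M.support
    · exact Submodule.subset_span (Set.mem_insert_iff.mpr (Or.inr (by
        simp only [Finset.coe_image, Set.mem_image, Finset.mem_coe]
        exact ⟨s, hs, rfl⟩)))
    · rw [Finsupp.notMem_support_iff.mp hs]; exact W.zero_mem
  set vW : Simp m → W := fun s => ⟨M s, hMs s⟩ with hvW
  have hone : (⟨1, h1⟩ : W) ≠ 0 := fun h => one_ne_zero (Subtype.ext_iff.mp h)
  have hs0 : LinearIndepOn ℚ id ({⟨1, h1⟩} : Set W) :=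
    LinearIndepOn.singleton hone
  let b : Module.Basis _ ℚ W := Module.Basis.extend hs0
  haveI : Fintype ↥(hs0.extend (Set.subset_univ _)) := FiniteDimensional.fintypeBasisIndex b
  refine ⟨↥(hs0.extend (Set.subset_univ _)), inferInstance, fun j => ((b j : W) : ℝ),
    fun j => Finsupp.onFinset M.support (fun s => b.repr (vW s) j) (fun s hne => by
      by_contra hns
      apply hne
      have h0 : vW s = 0 := Subtype.ext (by simp [hvW, Finsupp.notMem_support_iff.mp hns])
      show b.repr (vW s) j = 0
      rw [h0, map_zero]; rfl),
    ⟨⟨1, h1⟩, hs0.subset_extend _ rfl⟩, ?_, ?_, ?_⟩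
  · exact b.linearIndependent.map' W.subtype (Submodule.ker_subtype W)
  · exact congrArg Subtype.val (Module.Basis.extend_apply_self hs0 _)
  · ext s
    rw [Finsupp.finset_sum_apply]
    have hrepr := congrArg (Subtype.val : W → ℝ) (b.sum_repr (vW s))
    simp only [AddSubmonoidClass.coe_finset_sum] at hrepr
    refine Eq.trans hrepr.symm (Finset.sum_congr rfl fun j _ => ?_)
    rw [Finsupp.smul_apply, qr_apply, Finsupp.onFinset_apply, smul_eq_mul,
      SetLike.val_smul, Rat.smul_def, mul_comm]

end QRhelp

namespace QRhelp

lemma qr_sub {m : ℕ} (M N : GChain ℚ m) : qr (M - N) = qr M - qr N := by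
  ext s; simp

lemma bdry_finset_sum {R : Type} [CommRing R] {m : ℕ} {ι : Type} (t : Finset ι)
    (f : ι → GChain R (m + 1)) : bdry (∑ j ∈ t, f j) = ∑ j ∈ t, bdry (f j) := by
  classical
  induction t using Finset.induction with
  | empty => simp
  | insert _ _ hj ih => rw [Finset.sum_insert hj, Finset.sum_insert hj, bdry_add, ih]

lemma qr_finset_sum {m : ℕ} {ι : Type} (t : Finset ι) (f : ι → GChain ℚ m) :
    qr (∑ j ∈ t, f j) = ∑ j ∈ t, qr (f j) := by
  classical
  induction t using Finset.induction with
  | empty => simp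
  | insert _ _ hj ih => rw [Finset.sum_insert hj, Finset.sum_insert hj, qr_add, ih]

lemma indep_qr {m : ℕ} {ι : Type} [Fintype ι] {w : ι → ℝ} (hw : LinearIndependent ℚ w)
    (c : ι → GChain ℚ m) (h : ∑ j, w j • qr (c j) = 0) : ∀ j, c j = 0 := by
  intro j
  ext t
  have ht : ∑ i, (c i t) • w i = 0 := by
    have h2 := congrArg (fun N : GChain ℝ m => N t) h
    simp only [Finsupp.finset_sum_apply, Finsupp.smul_apply, qr_apply, smul_eq_mul,
      Finsupp.coe_zero, Pi.zero_apply] at h2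
    rw [← h2]
    exact Finset.sum_congr rfl fun i _ => by rw [Rat.smul_def, mul_comm]
  exact ((Fintype.linearIndependent_iff.mp hw) _ ht) j

lemma exists_rat_filling {m : ℕ} (Y : GChain ℚ m) (M₀ : GChain ℝ (m + 1))
    (hM : bdry M₀ = qr Y) {ε : ℝ} (hε : 0 < ε) :
    ∃ N : GChain ℚ (m + 1), bdry N = Y ∧ ((fnorm N : ℚ) : ℝ) ≤ fnorm M₀ + ε := by
  classical
  obtain ⟨ι, _, w, u, j₀, hind, hj₀, hdec⟩ := exists_decomp M₀
  have h1 : bdry M₀ = ∑ j, w j • qr (bdry (u j)) := by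
    rw [hdec, bdry_finset_sum]
    exact Finset.sum_congr rfl fun j _ => by rw [bdry_smul, bdry_qr]
  have h2 : ∑ j, w j • qr (if j = j₀ then Y else 0) = qr Y := by
    have he : ∀ j : ι, w j • qr (if j = j₀ then Y else 0)
        = if j = j₀ then w j₀ • qr Y else 0 := by
      intro j; by_cases hj : j = j₀ <;> simp [hj]
    rw [Finset.sum_congr rfl (fun j _ => he j), Finset.sum_ite_eq' Finset.univ j₀]
    simp [hj₀]
  have hbd : ∑ j, w j • qr (bdry (u j) - (if j = j₀ then Y else 0)) = 0 := by
    have : ∀ j : ι, w j • qr (bdry (u j) - (if j = j₀ then Y else 0))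
        = w j • qr (bdry (u j)) - w j • qr (if j = j₀ then Y else 0) := by
      intro j; rw [qr_sub, smul_sub]
    rw [Finset.sum_congr rfl (fun j _ => this j), Finset.sum_sub_distrib, ← h1, hM, h2,
      sub_self]
  have hker := indep_qr hind _ hbd
  have hfill : bdry (u j₀) = Y := by
    have := hker j₀; rw [if_pos rfl] at this; exact sub_eq_zero.mp this
  have hker' : ∀ j, j ≠ j₀ → bdry (u j) = 0 := by
    intro j hj
    have := hker j; rw [if_neg hj, sub_zero] at this; exact this
  set C : ℝ := ∑ j, fnorm (qr (u j)) with hC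
  have hC0 : 0 ≤ C := Finset.sum_nonneg fun j _ => fnorm_nonneg _
  set δ : ℝ := ε / (C + 1) with hδ
  have hδ0 : 0 < δ := div_pos hε (by linarith)
  choose q hq using fun j : ι => exists_rat_near (K := ℝ) (w j) hδ0
  refine ⟨u j₀ + ∑ j ∈ Finset.univ.erase j₀, q j • u j, ?_, ?_⟩
  · rw [bdry_add, bdry_finset_sum, hfill]
    rw [Finset.sum_congr rfl (fun j hj => by
      rw [bdry_smul, hker' j (Finset.ne_of_mem_erase hj), smul_zero])]
    simp
  · set N := u j₀ + ∑ j ∈ Finset.univ.erase j₀, q j • u j with hN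
    set D : GChain ℝ (m + 1) := ∑ j ∈ Finset.univ.erase j₀, ((q j : ℝ) - w j) • qr (u j)
      with hD
    have hqrN : qr N = M₀ + D := by
      rw [hN, qr_add, qr_finset_sum, hdec, hD]
      rw [Finset.sum_congr (rfl : Finset.univ.erase j₀ = _) (fun j _ => qr_smul (q j) (u j))]
      rw [← Finset.add_sum_erase Finset.univ (fun j => w j • qr (u j)) (Finset.mem_univ j₀),
        hj₀, one_smul]
      abel_nf
      rw [← Finset.sum_add_distrib]
      refine congrArg _ (Finset.sum_congr rfl fun j _ => ?_)
      rw [neg_one_zsmul, add_smul, neg_smul]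
      abel
    have hDle : fnorm D ≤ ε := by
      refine le_trans (fnorm_sum_le _ _) ?_
      have : ∀ j ∈ Finset.univ.erase j₀,
          fnorm (((q j : ℝ) - w j) • qr (u j)) ≤ δ * fnorm (qr (u j)) := by
        intro j _
        rw [fnorm_smul]
        refine mul_le_mul_of_nonneg_right ?_ (fnorm_nonneg _)
        rw [abs_sub_comm]
        exact le_of_lt (hq j)
      refine le_trans (Finset.sum_le_sum this) ?_
      rw [← Finset.mul_sum]
      have hsub : ∑ j ∈ Finset.univ.erase j₀, fnorm (qr (u j)) ≤ C :=
        Finset.sum_le_sum_of_subset_of_nonneg (Finset.erase_subset _ _)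
          (fun j _ _ => fnorm_nonneg _)
      calc δ * ∑ j ∈ Finset.univ.erase j₀, fnorm (qr (u j)) ≤ δ * (C + 1) := by
            apply mul_le_mul_of_nonneg_left (by linarith) (le_of_lt hδ0)
        _ = ε := div_mul_cancel₀ ε (by linarith)
    rw [← fnorm_qr, hqrN]
    calc fnorm (M₀ + D) ≤ fnorm M₀ + fnorm D := fnorm_add_le _ _
      _ ≤ fnorm M₀ + ε := by linarith

end QRhelp


/-- for any integral cycle, the minimal rational filling volume
equals the minimal real filling volume. -/
theorem qvol_eq_rvol {n : ℕ} (X : ZChain (n + 1)) (hX : bdry X = 0) :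
    qvol (toQ X) = rvol (toR X) := by
  classical
  have htr : toR X = QRhelp.qr (toQ X) := by
    ext s; simp [toR, toQ, QRhelp.qr]
  set Qs := {r : ℝ | ∃ M : GChain ℚ (n + 1 + 1), bdry M = toQ X ∧ ((fnorm M : ℚ) : ℝ) = r}
    with hQs
  set Rs := {r : ℝ | ∃ M : GChain ℝ (n + 1 + 1), bdry M = toR X ∧ fnorm M = r} with hRs
  have hq : qvol (toQ X) = sInf Qs := rfl
  have hr : rvol (toR X) = sInf Rs := rfl
  have hsub : Qs ⊆ Rs := by
    rintro r ⟨M, hM, rfl⟩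
    exact ⟨QRhelp.qr M, by rw [QRhelp.bdry_qr, hM, htr], QRhelp.fnorm_qr M⟩
  have bddR : BddBelow Rs := ⟨0, by rintro r ⟨M, _, rfl⟩; exact QRhelp.fnorm_nonneg M⟩
  have bddQ : BddBelow Qs := ⟨0, by
    rintro r ⟨M, _, rfl⟩
    exact_mod_cast QRhelp.fnorm_nonneg M⟩
  by_cases hne : Rs.Nonempty
  · obtain ⟨r₀, M₀, hM₀, hr₀⟩ := hne
    have hQne : Qs.Nonempty := by
      obtain ⟨N, hN, -⟩ := QRhelp.exists_rat_filling (toQ X) M₀ (by rw [hM₀, htr])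
        (one_pos (α := ℝ))
      exact ⟨_, N, hN, rfl⟩
    rw [hq, hr]
    refine le_antisymm ?_ (csInf_le_csInf bddR hQne hsub)
    refine le_csInf ⟨r₀, M₀, hM₀, hr₀⟩ ?_
    rintro r ⟨M, hM, rfl⟩
    by_contra hab
    push_neg at hab
    obtain ⟨N, hN, hNle⟩ := QRhelp.exists_rat_filling (toQ X) M (by rw [hM, htr])
      (show (0 : ℝ) < (sInf Qs - fnorm M) / 2 by linarith)
    have hle := csInf_le bddQ (show ((fnorm N : ℚ) : ℝ) ∈ Qs from ⟨N, hN, rfl⟩)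
    linarith
  · have hQe : Qs = ∅ := by
      rw [← Set.not_nonempty_iff_eq_empty]
      rintro ⟨r, hrQ⟩
      exact hne ⟨r, hsub hrQ⟩
    rw [hq, hr, hQe, Set.not_nonempty_iff_eq_empty.mp hne]
end

section
/- Qvol is additive under almost disjoint union: if X ∈ Z_n(A), Y ∈ Z_n(B) are rational n-cycles with |A ∩ B| ≤ n + 1, then Qvol(X + Y) = Qvol(X) + Qvol(Y). Moreover, for n ≥ 2 every taut rational filling of X + Y splits as a sum of taut rational fillings of X and of Y. -/
section Machinery

namespace QS

open Finset

/-- number of elements of `s` smaller than `x` -/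
def pos (s : Finset ℕ) (x : ℕ) : ℕ := (s.filter (· < x)).card

lemma pos_erase_lt {s : Finset ℕ} {y x : ℕ} (hy : y ∈ s) (h : y < x) :
    pos (s.erase y) x + 1 = pos s x := by
  unfold pos
  rw [Finset.filter_erase,
    Finset.card_erase_of_mem (by simp [Finset.mem_filter, hy, h])]
  have : 0 < (s.filter (· < x)).card :=
    Finset.card_pos.2 ⟨y, by simp [Finset.mem_filter, hy, h]⟩
  omega

lemma pos_erase_ge {s : Finset ℕ} {y x : ℕ} (h : ¬ y < x) :
    pos (s.erase y) x = pos s x := by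
  unfold pos
  rw [Finset.filter_erase, Finset.erase_eq_of_notMem
    (by simp only [Finset.mem_filter]; exact fun hc => h hc.2)]

lemma pos_insert_lt {s : Finset ℕ} {c x : ℕ} (hc : c ∉ s) (h : c < x) :
    pos (insert c s) x = pos s x + 1 := by
  unfold pos
  rw [Finset.filter_insert, if_pos h,
    Finset.card_insert_of_notMem (by simp [Finset.mem_filter, hc])]

lemma pos_insert_ge {s : Finset ℕ} {c x : ℕ} (h : ¬ c < x) :
    pos (insert c s) x = pos s x := by
  unfold pos; rw [Finset.filter_insert, if_neg h]

lemma negpow_congr {a b : ℕ} (h : a % 2 = b % 2) : ((-1:ℚ))^a = (-1)^b := by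
  rw [neg_one_pow_eq_pow_mod_two, h, ← neg_one_pow_eq_pow_mod_two]

lemma negpow_anti {a b : ℕ} (h : a % 2 ≠ b % 2) : ((-1:ℚ))^a = -(-1)^b := by
  have hb : a % 2 = (b+1) % 2 := by omega
  rw [negpow_congr hb, pow_succ]; ring

lemma negpow_add_eq_zero {a b : ℕ} (h : a % 2 ≠ b % 2) :
    ((-1:ℚ))^a + (-1)^b = 0 := by
  rw [negpow_anti h]; ring

lemma sdiff_erase_comm (s A : Finset ℕ) (y : ℕ) :
    (s.erase y) \ A = (s \ A).erase y := by
  ext x; simp only [Finset.mem_sdiff, Finset.mem_erase]; tauto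

/-- the single chain on vertex set `s`, or `0` if the cardinality is wrong -/
noncomputable def sgl (m : ℕ) (s : Finset ℕ) : GChain ℚ m :=
  if h : s.card = m + 1 then Finsupp.single ⟨s, h⟩ (1:ℚ) else 0

lemma sgl_pos {m : ℕ} {s : Finset ℕ} (h : s.card = m+1) :
    sgl m s = Finsupp.single ⟨s,h⟩ (1:ℚ) := dif_pos h

lemma sgl_ne_zero {m : ℕ} {s : Finset ℕ} (h : s.card = m+1) :
    sgl m s ≠ 0 := by
  rw [sgl_pos h]
  exact fun hc => one_ne_zero (Finsupp.single_eq_zero.1 hc)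

/-- the boundary operator, as a linear map -/
noncomputable def bdryL (R : Type) [CommRing R] (m : ℕ) :
    GChain R (m+1) →ₗ[R] GChain R m :=
  Finsupp.linearCombination R (simpBdry R)

lemma bdry_eq_bdryL {R : Type} [CommRing R] {m : ℕ} (M : GChain R (m+1)) :
    bdry M = bdryL R m M := by
  rw [bdryL, Finsupp.linearCombination_apply]; rfl

lemma bdry_add {R : Type} [CommRing R] {m : ℕ} (M N : GChain R (m+1)) :
    bdry (M + N) = bdry M + bdry N := by
  rw [bdry_eq_bdryL, bdry_eq_bdryL, bdry_eq_bdryL, map_add]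

lemma bdry_zero {R : Type} [CommRing R] {m : ℕ} :
    bdry (0 : GChain R (m+1)) = 0 := by
  rw [bdry_eq_bdryL, map_zero]

lemma bdry_sub {R : Type} [CommRing R] {m : ℕ} (M N : GChain R (m+1)) :
    bdry (M - N) = bdry M - bdry N := by
  rw [bdry_eq_bdryL, bdry_eq_bdryL, bdry_eq_bdryL, map_sub]

lemma bdry_smul {R : Type} [CommRing R] {m : ℕ} (k : R) (M : GChain R (m+1)) :
    bdry (k • M) = k • bdry M := by
  rw [bdry_eq_bdryL, bdry_eq_bdryL, map_smul]

lemma simpBdry_eq {m : ℕ} (σ : Simp (m+1)) :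
    simpBdry ℚ σ = ∑ v ∈ σ.1, ((-1:ℚ)^(pos σ.1 v)) • sgl m (σ.1.erase v) := by
  unfold simpBdry
  rw [← Finset.sum_attach σ.1 (fun v => ((-1:ℚ)^(pos σ.1 v)) • sgl m (σ.1.erase v))]
  refine Finset.sum_congr rfl ?_
  intro v _
  have hc : (σ.1.erase v.1).card = m + 1 := by
    rw [Finset.card_erase_of_mem v.2, σ.2]; omega
  rw [sgl_pos hc]
  rfl

lemma bdry_sgl {m : ℕ} {s : Finset ℕ} (hs : s.card = m+2) :
    bdry (sgl (m+1) s) = ∑ v ∈ s, ((-1:ℚ)^(pos s v)) • sgl m (s.erase v) := by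
  have h1 : s.card = (m+1)+1 := by omega
  rw [sgl_pos h1, bdry_eq_bdryL, bdryL, Finsupp.linearCombination_single, one_smul]
  exact simpBdry_eq ⟨s, h1⟩

lemma sum_sgl {m : ℕ} (M : GChain ℚ m) :
    (M.sum fun σ k => k • sgl m σ.1) = M := by
  have h : ∀ σ : Simp m, ∀ k : ℚ, k • sgl m σ.1 = Finsupp.single σ k := by
    intro σ k
    rw [sgl_pos σ.2, Finsupp.smul_single, smul_eq_mul, mul_one]
  calc M.sum (fun σ k => k • sgl m σ.1) = M.sum (fun σ k => Finsupp.single σ k) := by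
        apply Finsupp.sum_congr; intro σ _; exact h σ _
    _ = M := Finsupp.sum_single M

end QS

end Machinery
section Machinery2

namespace QS

open Finset

variable {m : ℕ} {A : Finset ℕ} {c : ℕ} {s : Finset ℕ} {v : ℕ}

/-- the chain map induced by the vertex map which is the identity on `A` and
sends everything else to `c`, on a single simplex with vertex set `s`. -/
noncomputable def pmapF (m : ℕ) (A : Finset ℕ) (c : ℕ) (s : Finset ℕ) : GChain ℚ m :=
  if s ⊆ A then sgl m s
  else (s \ A).sum fun v =>
    if (s \ A).card = 1 then
      (if c ∈ s.erase v then 0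
       else ((-1:ℚ)^(pos s v + pos (s.erase v) c)) • sgl m (insert c (s.erase v)))
    else 0

lemma pmapF_subset (h : s ⊆ A) : pmapF m A c s = sgl m s := if_pos h

lemma sdiff_single_mem (hv : s \ A = {v}) : v ∈ s ∧ v ∉ A :=
  Finset.mem_sdiff.1 (hv ▸ Finset.mem_singleton_self v)

lemma sdiff_single_not_subset (hv : s \ A = {v}) : ¬ s ⊆ A := by
  intro hsub
  rw [Finset.sdiff_eq_empty_iff_subset.2 hsub] at hv
  exact Finset.notMem_empty v (hv ▸ Finset.mem_singleton_self v)

lemma sdiff_single_erase_subset (hv : s \ A = {v}) : s.erase v ⊆ A := by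
  intro x hx
  rcases Finset.mem_erase.1 hx with ⟨hne, hxs⟩
  by_contra hxA
  have hmem : x ∈ s \ A := Finset.mem_sdiff.2 ⟨hxs, hxA⟩
  rw [hv] at hmem
  exact hne (Finset.mem_singleton.1 hmem)

lemma pmapF_one (hv : s \ A = {v}) :
    pmapF m A c s = (if c ∈ s.erase v then 0
       else ((-1:ℚ)^(pos s v + pos (s.erase v) c)) • sgl m (insert c (s.erase v))) := by
  have h1 : (s \ A).card = 1 := by rw [hv]; exact Finset.card_singleton v
  rw [pmapF, if_neg (sdiff_single_not_subset hv), hv, Finset.sum_singleton]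
  rw [if_pos (Finset.card_singleton v)]

lemma pmapF_mem (hv : s \ A = {v}) (hc : c ∈ s.erase v) : pmapF m A c s = 0 := by
  rw [pmapF_one hv, if_pos hc]

lemma pmapF_notmem (hv : s \ A = {v}) (hc : c ∉ s.erase v) :
    pmapF m A c s
      = ((-1:ℚ)^(pos s v + pos (s.erase v) c)) • sgl m (insert c (s.erase v)) := by
  rw [pmapF_one hv, if_neg hc]

lemma pmapF_ne (h2 : ¬ s ⊆ A) (h1 : (s \ A).card ≠ 1) : pmapF m A c s = 0 := by
  rw [pmapF, if_neg h2]
  exact Finset.sum_eq_zero fun v _ => if_neg h1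

/-- the induced chain map -/
noncomputable def PC (m : ℕ) (A : Finset ℕ) (c : ℕ) :
    GChain ℚ m →ₗ[ℚ] GChain ℚ m :=
  Finsupp.linearCombination ℚ (fun σ : Simp m => pmapF m A c σ.1)

lemma PC_apply (M : GChain ℚ m) :
    PC m A c M = M.sum fun σ k => k • pmapF m A c σ.1 :=
  Finsupp.linearCombination_apply ℚ M

lemma PC_single (σ : Simp m) (k : ℚ) :
    PC m A c (Finsupp.single σ k) = k • pmapF m A c σ.1 :=
  Finsupp.linearCombination_single ℚ k σ

lemma PC_sgl (h : s.card = m + 1) : PC m A c (sgl m s) = pmapF m A c s := by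
  rw [sgl_pos h, PC_single, one_smul]

end QS

end Machinery2
section Machinery3

namespace QS

open Finset

variable {m : ℕ} {A : Finset ℕ} {c : ℕ}

theorem bdry_pmapF {s : Finset ℕ} (hs : s.card = m + 2) :
    bdry (pmapF (m+1) A c s) = ∑ v ∈ s, ((-1:ℚ)^(pos s v)) • pmapF m A c (s.erase v) := by
  by_cases h0 : s ⊆ A
  · rw [pmapF_subset h0, bdry_sgl hs]
    refine Finset.sum_congr rfl fun v hv => ?_
    rw [pmapF_subset ((Finset.erase_subset _ _).trans h0)]
  by_cases h1 : (s \ A).card = 1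
  · obtain ⟨v₀, hv₀⟩ := Finset.card_eq_one.mp h1
    obtain ⟨hv₀s, hv₀A⟩ := sdiff_single_mem hv₀
    have hτA : s.erase v₀ ⊆ A := sdiff_single_erase_subset hv₀
    have hτc : (s.erase v₀).card = m + 1 := by
      rw [Finset.card_erase_of_mem hv₀s, hs]; omega
    have hv₀τ : v₀ ∉ s.erase v₀ := Finset.notMem_erase _ _
    have hfaces : ∀ y, y ≠ v₀ → (s.erase y) \ A = {v₀} := by
      intro y hy
      rw [sdiff_erase_comm, hv₀, Finset.erase_eq_of_notMem (by simp [hy])]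
    by_cases hcτ : c ∈ s.erase v₀
    · -- case 2 : `c` is another vertex of `s`; image degenerate, RHS cancels in pairs
      have hcs : c ∈ s := Finset.mem_of_mem_erase hcτ
      have hcv₀ : c ≠ v₀ := Finset.ne_of_mem_erase hcτ
      rw [pmapF_mem hv₀ hcτ, bdry_zero]
      have hsplit : insert v₀ (insert c ((s.erase v₀).erase c)) = s := by
        rw [Finset.insert_erase hcτ, Finset.insert_erase hv₀s]
      symm
      rw [show (∑ v ∈ s, ((-1:ℚ)^(pos s v)) • pmapF m A c (s.erase v))
            = ∑ v ∈ insert v₀ (insert c ((s.erase v₀).erase c)),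
                ((-1:ℚ)^(pos s v)) • pmapF m A c (s.erase v) from by rw [hsplit]]
      rw [Finset.sum_insert (by
            simp only [Finset.mem_insert]
            push_neg
            exact ⟨fun h => hcv₀ h.symm,
              fun h => hv₀τ (Finset.mem_of_mem_erase h)⟩),
          Finset.sum_insert (Finset.notMem_erase _ _)]
      have hterm0 : ∀ y ∈ (s.erase v₀).erase c,
          ((-1:ℚ)^(pos s y)) • pmapF m A c (s.erase y) = 0 := by
        intro y hy
        have hyv₀ : y ≠ v₀ := Finset.ne_of_mem_erase (Finset.mem_of_mem_erase hy)
        have hyc : y ≠ c := Finset.ne_of_mem_erase hy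
        have hmem : c ∈ (s.erase y).erase v₀ :=
          Finset.mem_erase.2 ⟨hcv₀, Finset.mem_erase.2 ⟨hyc.symm, hcs⟩⟩
        rw [pmapF_mem (hfaces y hyv₀) hmem, smul_zero]
      rw [Finset.sum_eq_zero hterm0, add_zero]
      rw [pmapF_subset hτA]
      have hface_c : (s.erase c) \ A = {v₀} := hfaces c hcv₀
      have hcnot : c ∉ (s.erase c).erase v₀ :=
        fun h => (Finset.notMem_erase c s) (Finset.mem_of_mem_erase h)
      rw [pmapF_notmem hface_c hcnot]
      have e1 : (s.erase c).erase v₀ = (s.erase v₀).erase c := Finset.erase_right_comm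
      rw [e1, Finset.insert_erase hcτ]
      rw [smul_smul, ← pow_add, ← add_smul]
      have hpar : (pos s v₀) % 2
          ≠ (pos s c + (pos (s.erase c) v₀ + pos ((s.erase v₀).erase c) c)) % 2 := by
        have r2 : pos ((s.erase v₀).erase c) c = pos (s.erase v₀) c :=
          pos_erase_ge (lt_irrefl c)
        rcases Nat.lt_trichotomy c v₀ with h | h | h
        · have r1 := pos_erase_lt hcs h
          have r3 : pos (s.erase v₀) c = pos s c := pos_erase_ge (by omega)
          omega
        · exact absurd h hcv₀
        · have r1 : pos (s.erase c) v₀ = pos s v₀ := pos_erase_ge (by omega)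
          have r3 := pos_erase_lt hv₀s h
          omega
      rw [negpow_add_eq_zero hpar, zero_smul]
    by_cases hcv : c = v₀
    · -- case 1b : `c` is the vertex being replaced; the map is the identity here
      subst hcv
      rw [pmapF_notmem hv₀ hcτ, Finset.insert_erase hv₀s,
        pos_erase_ge (lt_irrefl c)]
      have he : ((-1:ℚ))^(pos s c + pos s c) = 1 := by
        rw [← two_mul, pow_mul]; norm_num
      rw [he, one_smul, bdry_sgl hs]
      refine Finset.sum_congr rfl fun y hy => ?_
      by_cases hyv : y = c
      · subst hyv; rw [pmapF_subset hτA]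
      · have hface := hfaces y hyv
        have hnot : c ∉ (s.erase y).erase c := Finset.notMem_erase _ _
        rw [pmapF_notmem hface hnot,
          Finset.insert_erase (Finset.mem_erase.2 ⟨fun h => hyv h.symm, hv₀s⟩),
          pos_erase_ge (lt_irrefl c)]
        have he2 : ((-1:ℚ))^(pos (s.erase y) c + pos (s.erase y) c) = 1 := by
          rw [← two_mul, pow_mul]; norm_num
        rw [he2, one_smul]
    · -- case 1a : main case, `c` fresh
      have hcs' : c ∉ s := fun hcs => hcτ (Finset.mem_erase.2 ⟨hcv, hcs⟩)
      rw [pmapF_notmem hv₀ hcτ]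
      have htc : (insert c (s.erase v₀)).card = m + 2 := by
        rw [Finset.card_insert_of_notMem hcτ, hτc]
      rw [bdry_smul, bdry_sgl htc, Finset.sum_insert hcτ, smul_add, Finset.smul_sum]
      rw [show (∑ v ∈ s, ((-1:ℚ)^(pos s v)) • pmapF m A c (s.erase v))
            = ∑ v ∈ insert v₀ (s.erase v₀),
                ((-1:ℚ)^(pos s v)) • pmapF m A c (s.erase v) from by
              rw [Finset.insert_erase hv₀s]]
      rw [Finset.sum_insert hv₀τ]
      congr 1
      · rw [Finset.erase_insert hcτ, pmapF_subset hτA, smul_smul, ← pow_add]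
        congr 1
        apply negpow_congr
        have r1 : pos (insert c (s.erase v₀)) c = pos (s.erase v₀) c :=
          pos_insert_ge (lt_irrefl c)
        omega
      · refine Finset.sum_congr rfl fun y hy => ?_
        have hys : y ∈ s := Finset.mem_of_mem_erase hy
        have hyv₀ : y ≠ v₀ := Finset.ne_of_mem_erase hy
        have hyc : y ≠ c := fun h => hcs' (h ▸ hys)
        have hcnot : c ∉ (s.erase y).erase v₀ :=
          fun h => hcs' (Finset.mem_of_mem_erase (Finset.mem_of_mem_erase h))
        rw [pmapF_notmem (hfaces y hyv₀) hcnot]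
        have e1 : (s.erase y).erase v₀ = (s.erase v₀).erase y := Finset.erase_right_comm
        have e2 : insert c ((s.erase v₀).erase y) = (insert c (s.erase v₀)).erase y :=
          (Finset.erase_insert_of_ne hyc.symm).symm
        rw [e1, e2, smul_smul, smul_smul, ← pow_add, ← pow_add]
        congr 1
        apply negpow_congr
        rcases Nat.lt_trichotomy c y with h₁ | h₁ | h₁
        · have a1 := pos_insert_lt hcτ h₁
          have a2 : pos ((s.erase v₀).erase y) c = pos (s.erase v₀) c :=
            pos_erase_ge (by omega)
          rcases Nat.lt_trichotomy v₀ y with h₂ | h₂ | h₂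
          · have a3 := pos_erase_lt hv₀s h₂
            have a4 : pos (s.erase y) v₀ = pos s v₀ := pos_erase_ge (by omega)
            omega
          · exact absurd h₂.symm hyv₀
          · have a3 : pos (s.erase v₀) y = pos s y := pos_erase_ge (by omega)
            have a4 := pos_erase_lt hys h₂
            omega
        · exact absurd h₁.symm hyc
        · have a1 : pos (insert c (s.erase v₀)) y = pos (s.erase v₀) y :=
            pos_insert_ge (by omega)
          have a2 := pos_erase_lt hy h₁
          rcases Nat.lt_trichotomy v₀ y with h₂ | h₂ | h₂
          · have a3 := pos_erase_lt hv₀s h₂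
            have a4 : pos (s.erase y) v₀ = pos s v₀ := pos_erase_ge (by omega)
            omega
          · exact absurd h₂.symm hyv₀
          · have a3 : pos (s.erase v₀) y = pos s y := pos_erase_ge (by omega)
            have a4 := pos_erase_lt hys h₂
            omega
  · -- at least two vertices outside `A`
    have hne : s \ A ≠ ∅ := fun he => h0 (Finset.sdiff_eq_empty_iff_subset.1 he)
    have h2 : 2 ≤ (s \ A).card := by
      have := Finset.card_pos.2 (Finset.nonempty_iff_ne_empty.2 hne)
      omega
    rw [pmapF_ne h0 h1, bdry_zero]
    symm
    by_cases h3 : (s \ A).card = 2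
    · obtain ⟨v₁, v₂, hv12, hv⟩ := Finset.card_eq_two.mp h3
      have hv₁ : v₁ ∈ s \ A := by rw [hv]; simp
      have hv₂ : v₂ ∈ s \ A := by rw [hv]; simp
      obtain ⟨hv₁s, hv₁A⟩ := Finset.mem_sdiff.1 hv₁
      obtain ⟨hv₂s, hv₂A⟩ := Finset.mem_sdiff.1 hv₂
      have hd1 : (s.erase v₁) \ A = {v₂} := by
        rw [sdiff_erase_comm, hv,
          show ({v₁, v₂} : Finset ℕ) = insert v₁ {v₂} from rfl,
          Finset.erase_insert (by simp [hv12])]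
      have hd2 : (s.erase v₂) \ A = {v₁} := by
        rw [sdiff_erase_comm, hv, Finset.pair_comm,
          show ({v₂, v₁} : Finset ℕ) = insert v₂ {v₁} from rfl,
          Finset.erase_insert (by simp [hv12.symm])]
      have hv₂e : v₂ ∈ s.erase v₁ := Finset.mem_erase.2 ⟨hv12.symm, hv₂s⟩
      have hsplit : insert v₁ (insert v₂ ((s.erase v₁).erase v₂)) = s := by
        rw [Finset.insert_erase hv₂e, Finset.insert_erase hv₁s]
      rw [show (∑ v ∈ s, ((-1:ℚ)^(pos s v)) • pmapF m A c (s.erase v))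
            = ∑ v ∈ insert v₁ (insert v₂ ((s.erase v₁).erase v₂)),
                ((-1:ℚ)^(pos s v)) • pmapF m A c (s.erase v) from by rw [hsplit]]
      rw [Finset.sum_insert (by
            simp only [Finset.mem_insert]
            push_neg
            exact ⟨hv12, fun h => (Finset.notMem_erase v₁ s)
              (Finset.mem_of_mem_erase h)⟩),
          Finset.sum_insert (Finset.notMem_erase _ _)]
      have hterm0 : ∀ y ∈ (s.erase v₁).erase v₂,
          ((-1:ℚ)^(pos s y)) • pmapF m A c (s.erase y) = 0 := by
        intro y hy
        have hyv₂ : y ≠ v₂ := Finset.ne_of_mem_erase hy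
        have hyv₁ : y ≠ v₁ := Finset.ne_of_mem_erase (Finset.mem_of_mem_erase hy)
        have hyd : (s.erase y) \ A = {v₁, v₂} := by
          rw [sdiff_erase_comm, hv, Finset.erase_eq_of_notMem (by simp [hyv₁, hyv₂])]
        have hsub : ¬ s.erase y ⊆ A := by
          intro hsub
          rw [Finset.sdiff_eq_empty_iff_subset.2 hsub] at hyd
          exact Finset.notMem_empty v₁ (hyd ▸ Finset.mem_insert_self v₁ {v₂})
        have hcard : ((s.erase y) \ A).card ≠ 1 := by
          rw [hyd, Finset.card_pair hv12]; omega
        rw [pmapF_ne hsub hcard, smul_zero]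
      rw [Finset.sum_eq_zero hterm0, add_zero]
      by_cases hcρ : c ∈ (s.erase v₁).erase v₂
      · rw [pmapF_mem hd1 hcρ, pmapF_mem hd2 (by
          rw [Finset.erase_right_comm]; exact hcρ), smul_zero, smul_zero, add_zero]
      · rw [pmapF_notmem hd1 hcρ]
        have hcρ' : c ∉ (s.erase v₂).erase v₁ := by
          rw [Finset.erase_right_comm]; exact hcρ
        rw [pmapF_notmem hd2 hcρ']
        have e1 : (s.erase v₂).erase v₁ = (s.erase v₁).erase v₂ := Finset.erase_right_comm
        rw [e1, smul_smul, smul_smul, ← pow_add, ← pow_add, ← add_smul]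
        have hpar : (pos s v₁ + (pos (s.erase v₁) v₂ + pos ((s.erase v₁).erase v₂) c)) % 2
            ≠ (pos s v₂ + (pos (s.erase v₂) v₁ + pos ((s.erase v₁).erase v₂) c)) % 2 := by
          rcases Nat.lt_trichotomy v₁ v₂ with h | h | h
          · have r1 := pos_erase_lt hv₁s h
            have r2 : pos (s.erase v₂) v₁ = pos s v₁ := pos_erase_ge (by omega)
            omega
          · exact absurd h hv12
          · have r1 : pos (s.erase v₁) v₂ = pos s v₂ := pos_erase_ge (by omega)
            have r2 := pos_erase_lt hv₂s h
            omega
        rw [negpow_add_eq_zero hpar, zero_smul]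
    · -- at least three vertices outside `A`
      refine Finset.sum_eq_zero fun v hv => ?_
      have h4 : 3 ≤ (s \ A).card := by omega
      have hge : 2 ≤ ((s.erase v) \ A).card := by
        rw [sdiff_erase_comm]
        have := Finset.pred_card_le_card_erase (s := s \ A) (a := v)
        omega
      have hnonempty : ((s.erase v) \ A).Nonempty := Finset.card_pos.1 (by omega)
      obtain ⟨x, hx⟩ := hnonempty
      obtain ⟨hx1, hx2⟩ := Finset.mem_sdiff.1 hx
      rw [pmapF_ne (fun hsub => hx2 (hsub hx1)) (by omega), smul_zero]

end QS

end Machinery3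
section Machinery4

namespace QS

open Finset

variable {m : ℕ} {A B' : Finset ℕ} {c : ℕ}

lemma PC_simpBdry (σ : Simp (m+1)) :
    PC m A c (simpBdry ℚ σ)
      = ∑ v ∈ σ.1, ((-1:ℚ)^(pos σ.1 v)) • pmapF m A c (σ.1.erase v) := by
  rw [simpBdry_eq, map_sum]
  refine Finset.sum_congr rfl fun v hv => ?_
  rw [map_smul, PC_sgl (by rw [Finset.card_erase_of_mem hv, σ.2]; omega)]

theorem bdry_PC (M : GChain ℚ (m+1)) :
    bdry (PC (m+1) A c M) = PC m A c (bdry M) := by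
  induction M using Finsupp.induction_linear with
  | zero => rw [map_zero, bdry_zero, map_zero]
  | add f g hf hg => rw [map_add, bdry_add, bdry_add, map_add, hf, hg]
  | single σ k =>
    rw [PC_single, bdry_eq_bdryL (R := ℚ), map_smul, ← bdry_eq_bdryL,
      bdry_pmapF σ.2, bdry_eq_bdryL (R := ℚ), bdryL,
      Finsupp.linearCombination_single, map_smul, PC_simpBdry]

lemma PC_of_suppOn {M : GChain ℚ m} (hA : suppOn A M) : PC m A c M = M := by
  rw [PC_apply]
  calc M.sum (fun σ k => k • pmapF m A c σ.1)
      = M.sum (fun σ k => Finsupp.single σ k) := by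
        apply Finsupp.sum_congr
        intro σ hσ
        rw [pmapF_subset (hA σ hσ), sgl_pos σ.2, Finsupp.smul_single,
          smul_eq_mul, mul_one]
    _ = M := Finsupp.sum_single M

lemma bdry_single_zero {σ : Simp (m+1)} {k : ℚ}
    (h : bdry (Finsupp.single σ k) = 0) : k = 0 := by
  by_contra hk
  have hne : σ.1.Nonempty := Finset.card_pos.1 (by rw [σ.2]; omega)
  set v := σ.1.min' hne with hvdef
  have hv : v ∈ σ.1 := Finset.min'_mem _ _
  have hcard : (σ.1.erase v).card = m+1 := by
    rw [Finset.card_erase_of_mem hv, σ.2]; omega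
  have hb : bdry (Finsupp.single σ k) = k • simpBdry ℚ σ := by
    rw [bdry_eq_bdryL, bdryL, Finsupp.linearCombination_single]
  have heval : (bdry (Finsupp.single σ k)) ⟨σ.1.erase v, hcard⟩
      = k * (-1)^(pos σ.1 v) := by
    rw [hb, Finsupp.smul_apply, simpBdry_eq, Finset.sum_apply']
    rw [Finset.sum_eq_single_of_mem v hv]
    · rw [sgl_pos hcard, Finsupp.smul_apply, Finsupp.single_apply, if_pos rfl]
      simp
    · intro u hu hne'
      have hkey : (σ.1.erase u) ≠ (σ.1.erase v) := by
        intro he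
        exact hne' ((Finset.erase_inj σ.1 hu).1 he)
      by_cases hc2 : (σ.1.erase u).card = m + 1
      · rw [sgl_pos hc2, Finsupp.smul_apply, Finsupp.single_apply,
          if_neg (by intro hcontra; exact hkey (congrArg Subtype.val hcontra)),
          smul_eq_mul, mul_zero]
      · rw [sgl, dif_neg hc2, smul_zero]; rfl
  rw [h] at heval
  have : k * (-1:ℚ)^(pos σ.1 v) ≠ 0 := by
    apply mul_ne_zero hk
    apply pow_ne_zero
    norm_num
  exact this heval.symm

lemma PC_cycle_zero {Z : GChain ℚ (m+1)} (hZ : bdry Z = 0) (hB : suppOn B' Z)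
    (hW : (A ∩ B').card ≤ m + 2) (hc : c ∈ A ∩ B' ∨ A ∩ B' = ∅) :
    PC (m+1) A c Z = 0 := by
  have hkeys : ∀ δ ∈ (PC (m+1) A c Z).support, δ.1 ⊆ A ∩ B' := by
    intro δ hδ
    rw [PC_apply] at hδ
    have := Finsupp.support_sum hδ
    rw [Finset.mem_biUnion] at this
    obtain ⟨σ, hσ, hδ2⟩ := this
    have hδ3 : δ ∈ (pmapF (m+1) A c σ.1).support :=
      Finsupp.support_smul hδ2
    have hsB : σ.1 ⊆ B' := hB σ hσ
    by_cases h0 : σ.1 ⊆ A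
    · rw [pmapF_subset h0, sgl_pos σ.2] at hδ3
      have : δ = ⟨σ.1, σ.2⟩ := by
        have := Finsupp.support_single_subset hδ3
        simpa using this
      rw [this]
      exact Finset.subset_inter h0 hsB
    by_cases h1 : (σ.1 \ A).card = 1
    · obtain ⟨v, hv⟩ := Finset.card_eq_one.mp h1
      by_cases hcm : c ∈ σ.1.erase v
      · rw [pmapF_mem hv hcm] at hδ3
        simp at hδ3
      · rw [pmapF_notmem hv hcm] at hδ3
        have hδ4 := Finsupp.support_smul hδ3
        have hsub : σ.1.erase v ⊆ A ∩ B' :=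
          Finset.subset_inter (sdiff_single_erase_subset hv)
            ((Finset.erase_subset _ _).trans hsB)
        have hcA : c ∈ A ∩ B' := by
          rcases hc with hc | hc
          · exact hc
          · exfalso
            have hcard : (σ.1.erase v).card = m + 1 := by
              rw [Finset.card_erase_of_mem (sdiff_single_mem hv).1, σ.2]; omega
            have : σ.1.erase v = ∅ := Finset.subset_empty.1 (hc ▸ hsub)
            rw [this] at hcard
            simp at hcard
        by_cases hc2 : (insert c (σ.1.erase v)).card = m + 2
        · rw [sgl_pos hc2] at hδ4
          have : δ = ⟨insert c (σ.1.erase v), hc2⟩ := by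
            have := Finsupp.support_single_subset hδ4
            simpa using this
          rw [this]
          exact Finset.insert_subset hcA hsub
        · rw [sgl, dif_neg hc2] at hδ4
          simp at hδ4
    · rw [pmapF_ne h0 h1] at hδ3
      simp at hδ3
  rcases Nat.lt_or_ge (A ∩ B').card (m+2) with hlt | hge
  · have : (PC (m+1) A c Z).support = ∅ := by
      rw [Finset.eq_empty_iff_forall_notMem]
      intro δ hδ
      have := Finset.card_le_card (hkeys δ hδ)
      rw [δ.2] at this
      omega
    exact Finsupp.support_eq_empty.1 this
  · have hWc : (A ∩ B').card = m + 2 := le_antisymm hW hge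
    have hsupp : (PC (m+1) A c Z).support ⊆ {⟨A ∩ B', hWc⟩} := by
      intro δ hδ
      have h1 := hkeys δ hδ
      have h2 : δ.1 = A ∩ B' :=
        Finset.eq_of_subset_of_card_le h1 (by rw [δ.2, hWc])
      simp only [Finset.mem_singleton]
      exact Subtype.ext h2
    have heq := Finsupp.support_subset_singleton.1 hsupp
    have hbd : bdry (PC (m+1) A c Z) = 0 := by
      rw [bdry_PC, hZ, map_zero]
    rw [heq] at hbd ⊢
    rw [bdry_single_zero hbd, Finsupp.single_zero]

end QS

end Machinery4
section Machinery5

namespace QS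

open Finset

variable {m : ℕ} {A : Finset ℕ} {c : ℕ} {s : Finset ℕ} {v : ℕ}

lemma fnorm_eq_sum {M : GChain ℚ m} {t : Finset (Simp m)} (h : M.support ⊆ t) :
    fnorm M = ∑ σ ∈ t, |M σ| :=
  Finsupp.sum_of_support_subset M h _ (by simp)

lemma fnorm_nonneg (M : GChain ℚ m) : 0 ≤ fnorm M :=
  Finset.sum_nonneg fun σ _ => abs_nonneg _

lemma fnorm_zero : fnorm (0 : GChain ℚ m) = 0 := by
  simp [fnorm, Finsupp.sum]

lemma fnorm_add_le (M N : GChain ℚ m) : fnorm (M + N) ≤ fnorm M + fnorm N := by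
  rw [fnorm_eq_sum (t := M.support ∪ N.support) Finsupp.support_add,
    fnorm_eq_sum (t := M.support ∪ N.support) Finset.subset_union_left,
    fnorm_eq_sum (t := M.support ∪ N.support) Finset.subset_union_right,
    ← Finset.sum_add_distrib]
  exact Finset.sum_le_sum fun σ _ => by rw [Finsupp.add_apply]; exact abs_add_le _ _

lemma fnorm_sum_le {ι : Type} (t : Finset ι) (f : ι → GChain ℚ m) :
    fnorm (∑ i ∈ t, f i) ≤ ∑ i ∈ t, fnorm (f i) := by
  induction t using Finset.cons_induction with
  | empty => simp [fnorm_zero]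
  | cons i t hit ih =>
    rw [Finset.sum_cons, Finset.sum_cons]
    exact le_trans (fnorm_add_le _ _) (by linarith)

lemma fnorm_smul (k : ℚ) (M : GChain ℚ m) : fnorm (k • M) = |k| * fnorm M := by
  rcases eq_or_ne k 0 with hk | hk
  · subst hk; rw [zero_smul, fnorm_zero, abs_zero, zero_mul]
  · rw [fnorm_eq_sum (t := M.support) Finsupp.support_smul, fnorm, Finsupp.sum,
      Finset.mul_sum]
    exact Finset.sum_congr rfl fun σ _ => by rw [Finsupp.smul_apply, smul_eq_mul, abs_mul]

lemma fnorm_sgl_le : fnorm (sgl m s) ≤ 1 := by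
  by_cases h : s.card = m + 1
  · rw [sgl_pos h, fnorm, Finsupp.sum_single_index (by simp)]
    simp
  · rw [sgl, dif_neg h, fnorm_zero]; norm_num

lemma fnorm_pmapF_le : fnorm (pmapF m A c s) ≤ 1 := by
  by_cases h0 : s ⊆ A
  · rw [pmapF_subset h0]; exact fnorm_sgl_le
  by_cases h1 : (s \ A).card = 1
  · obtain ⟨v, hv⟩ := Finset.card_eq_one.mp h1
    by_cases hcm : c ∈ s.erase v
    · rw [pmapF_mem hv hcm, fnorm_zero]; norm_num
    · rw [pmapF_notmem hv hcm, fnorm_smul]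
      have h2 : |(-1:ℚ)^(pos s v + pos (s.erase v) c)| = 1 := by
        rw [abs_pow, abs_neg, abs_one, one_pow]
      rw [h2, one_mul]
      exact fnorm_sgl_le
  · rw [pmapF_ne h0 h1, fnorm_zero]; norm_num

lemma fnorm_PC_le (M : GChain ℚ m) :
    fnorm (PC m A c M)
      ≤ ∑ σ ∈ M.support.filter (fun σ => pmapF m A c σ.1 ≠ 0), |M σ| := by
  have hrw : PC m A c M
      = ∑ σ ∈ M.support.filter (fun σ => pmapF m A c σ.1 ≠ 0),
          M σ • pmapF m A c σ.1 := by
    rw [PC_apply, Finsupp.sum]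
    symm
    apply Finset.sum_subset (Finset.filter_subset _ _)
    intro σ hσ hnot
    simp only [Finset.mem_filter, not_and, not_not] at hnot
    rw [hnot hσ, smul_zero]
  rw [hrw]
  refine le_trans (fnorm_sum_le _ _) (Finset.sum_le_sum fun σ _ => ?_)
  rw [fnorm_smul]
  calc |M σ| * fnorm (pmapF m A c σ.1) ≤ |M σ| * 1 :=
        mul_le_mul_of_nonneg_left fnorm_pmapF_le (abs_nonneg _)
    _ = |M σ| := mul_one _

lemma pmapF_nonzero_char (hcard : s.card = m+1) (h : pmapF m A c s ≠ 0) :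
    s ⊆ A ∨ ∃ v, s \ A = {v} ∧ (c ∉ s ∨ c = v) := by
  by_cases h0 : s ⊆ A
  · exact Or.inl h0
  by_cases h1 : (s \ A).card = 1
  · obtain ⟨v, hv⟩ := Finset.card_eq_one.mp h1
    by_cases hcm : c ∈ s.erase v
    · exact absurd (pmapF_mem hv hcm) h
    · refine Or.inr ⟨v, hv, ?_⟩
      by_cases hcv : c = v
      · exact Or.inr hcv
      · exact Or.inl fun hcs => hcm (Finset.mem_erase.2 ⟨hcv, hcs⟩)
  · exact absurd (pmapF_ne h0 h1) h

lemma pmapF_nonzero_subset (hcard : s.card = m+1) (h : s ⊆ A) :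
    pmapF m A c s ≠ 0 := by
  rw [pmapF_subset h]; exact sgl_ne_zero hcard

lemma pmapF_nonzero_out (hcard : s.card = m+1) (hv : s \ A = {v}) (hcs : c ∉ s) :
    pmapF m A c s ≠ 0 := by
  have hcm : c ∉ s.erase v := fun h => hcs (Finset.mem_of_mem_erase h)
  rw [pmapF_notmem hv hcm]
  apply smul_ne_zero (pow_ne_zero _ (by norm_num))
  apply sgl_ne_zero
  rw [Finset.card_insert_of_notMem hcm,
    Finset.card_erase_of_mem (sdiff_single_mem hv).1, hcard]
  omega

lemma pmapF_not_both {n : ℕ} {A B : Finset ℕ} {c c' : ℕ} {s : Finset ℕ}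
    (hs : s.card = n + 3) (hW : (A ∩ B).card ≤ n + 2)
    (hc : c ∈ A ∩ B ∨ A ∩ B = ∅) (hc' : c' ∈ A ∩ B ∨ A ∩ B = ∅)
    (hcc' : (A ∩ B).card = n + 2 → c ≠ c')
    (h1 : pmapF (n+2) A c s ≠ 0) (h2 : pmapF (n+2) B c' s ≠ 0) : False := by
  have hs' : s.card = (n+2)+1 := by omega
  have hAB : ∀ v' : ℕ, s ⊆ A → s \ B = {v'} → (c' ∉ s ∨ c' = v') → False := by
    intro v' hA hv' hcv'
    have hsub : s.erase v' ⊆ A ∩ B :=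
      Finset.subset_inter ((Finset.erase_subset _ _).trans hA)
        (sdiff_single_erase_subset hv')
    have hcard2 : (s.erase v').card = n + 2 := by
      rw [Finset.card_erase_of_mem (sdiff_single_mem hv').1, hs]; omega
    have heq : s.erase v' = A ∩ B :=
      Finset.eq_of_subset_of_card_le hsub (by omega)
    have hne : A ∩ B ≠ ∅ := by
      rw [← heq]
      intro hcon
      rw [hcon] at hcard2
      simp at hcard2
    have hcAB : c' ∈ A ∩ B := hc'.resolve_right hne
    rw [← heq] at hcAB
    rcases hcv' with hh | hh
    · exact hh (Finset.mem_of_mem_erase hcAB)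
    · exact (Finset.ne_of_mem_erase hcAB) hh
  have hBA : ∀ v : ℕ, s ⊆ B → s \ A = {v} → (c ∉ s ∨ c = v) → False := by
    intro v hB hv hcv
    have hsub : s.erase v ⊆ A ∩ B :=
      Finset.subset_inter (sdiff_single_erase_subset hv)
        ((Finset.erase_subset _ _).trans hB)
    have hcard2 : (s.erase v).card = n + 2 := by
      rw [Finset.card_erase_of_mem (sdiff_single_mem hv).1, hs]; omega
    have heq : s.erase v = A ∩ B :=
      Finset.eq_of_subset_of_card_le hsub (by omega)
    have hne : A ∩ B ≠ ∅ := by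
      rw [← heq]
      intro hcon
      rw [hcon] at hcard2
      simp at hcard2
    have hcAB : c ∈ A ∩ B := hc.resolve_right hne
    rw [← heq] at hcAB
    rcases hcv with hh | hh
    · exact hh (Finset.mem_of_mem_erase hcAB)
    · exact (Finset.ne_of_mem_erase hcAB) hh
  rcases pmapF_nonzero_char hs' h1 with hA | ⟨v, hv, hcv⟩
  · rcases pmapF_nonzero_char hs' h2 with hB | ⟨v', hv', hcv'⟩
    · have := Finset.card_le_card (Finset.subset_inter hA hB)
      omega
    · exact hAB v' hA hv' hcv'
  · rcases pmapF_nonzero_char hs' h2 with hB | ⟨v', hv', hcv'⟩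
    · exact hBA v hB hv hcv
    · by_cases hvv : v = v'
      · subst hvv
        have hsub : s.erase v ⊆ A ∩ B :=
          Finset.subset_inter (sdiff_single_erase_subset hv)
            (sdiff_single_erase_subset hv')
        have hcard2 : (s.erase v).card = n + 2 := by
          rw [Finset.card_erase_of_mem (sdiff_single_mem hv).1, hs]; omega
        have heq : s.erase v = A ∩ B :=
          Finset.eq_of_subset_of_card_le hsub (by omega)
        have hne : A ∩ B ≠ ∅ := by
          rw [← heq]
          intro hcon
          rw [hcon] at hcard2
          simp at hcard2
        have hcAB : c ∈ A ∩ B := hc.resolve_right hne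
        rw [← heq] at hcAB
        rcases hcv with hh | hh
        · exact hh (Finset.mem_of_mem_erase hcAB)
        · exact (Finset.ne_of_mem_erase hcAB) hh
      · obtain ⟨hvs, hvA⟩ := sdiff_single_mem hv
        obtain ⟨hv's, hv'B⟩ := sdiff_single_mem hv'
        have hv'e : v' ∈ s.erase v := Finset.mem_erase.2 ⟨fun hh => hvv hh.symm, hv's⟩
        have hE : (s.erase v).erase v' ⊆ A ∩ B := by
          apply Finset.subset_inter
          · exact (Finset.erase_subset _ _).trans (sdiff_single_erase_subset hv)
          · rw [Finset.erase_right_comm]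
            exact (Finset.erase_subset _ _).trans (sdiff_single_erase_subset hv')
        have hEcard : ((s.erase v).erase v').card = n + 1 := by
          rw [Finset.card_erase_of_mem hv'e, Finset.card_erase_of_mem hvs, hs]; omega
        have hWge : n + 1 ≤ (A ∩ B).card := by
          have := Finset.card_le_card hE; omega
        have hne : A ∩ B ≠ ∅ := by
          intro hcon; rw [hcon] at hWge; simp at hWge
        have hcA : c ∈ A ∩ B := hc.resolve_right hne
        have hc'A : c' ∈ A ∩ B := hc'.resolve_right hne
        have hcs : c ∉ s := by
          rcases hcv with hh | hh
          · exact hh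
          · exact absurd (hh ▸ (Finset.mem_inter.1 hcA).1) hvA
        have hc's : c' ∉ s := by
          rcases hcv' with hh | hh
          · exact hh
          · exact absurd (hh ▸ (Finset.mem_inter.1 hc'A).2) hv'B
        rcases Nat.lt_or_ge (A ∩ B).card (n+2) with hlt | hge2
        · have heq : (s.erase v).erase v' = A ∩ B :=
            Finset.eq_of_subset_of_card_le hE (by omega)
          rw [← heq] at hcA
          exact hcs (Finset.mem_of_mem_erase (Finset.mem_of_mem_erase hcA))
        · have hWc : (A ∩ B).card = n + 2 := le_antisymm hW hge2
          have hccne : c ≠ c' := hcc' hWc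
          have hc'E : c' ∉ (s.erase v).erase v' :=
            fun hh => hc's (Finset.mem_of_mem_erase (Finset.mem_of_mem_erase hh))
          have hcE : c ∉ insert c' ((s.erase v).erase v') := by
            simp only [Finset.mem_insert]
            push_neg
            exact ⟨hccne,
              fun hh => hcs (Finset.mem_of_mem_erase (Finset.mem_of_mem_erase hh))⟩
          have hbig : insert c (insert c' ((s.erase v).erase v')) ⊆ A ∩ B :=
            Finset.insert_subset hcA (Finset.insert_subset hc'A hE)
          have hbigcard : (insert c (insert c' ((s.erase v).erase v'))).card = n + 3 := by
            rw [Finset.card_insert_of_notMem hcE,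
              Finset.card_insert_of_notMem hc'E, hEcard]
          have := Finset.card_le_card hbig
          omega

end QS

end Machinery5
section Machinery6

namespace QS

open Finset

variable {m : ℕ} {x : ℕ}

/-- the cone map -/
noncomputable def qcone (m : ℕ) (x : ℕ) : GChain ℚ m →ₗ[ℚ] GChain ℚ (m+1) :=
  Finsupp.linearCombination ℚ
    (fun σ : Simp m => ((-1:ℚ)^(pos σ.1 x)) • sgl (m+1) (insert x σ.1))

lemma qcone_sgl {s : Finset ℕ} (h : s.card = m + 1) :
    qcone m x (sgl m s) = ((-1:ℚ)^(pos s x)) • sgl (m+1) (insert x s) := by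
  rw [sgl_pos h, qcone, Finsupp.linearCombination_single, one_smul]

lemma qcone_simpBdry (σ : Simp (m+1)) :
    qcone m x (simpBdry ℚ σ)
      = ∑ y ∈ σ.1, ((-1:ℚ)^(pos σ.1 y)) •
          (((-1:ℚ)^(pos (σ.1.erase y) x)) • sgl (m+1) (insert x (σ.1.erase y))) := by
  rw [simpBdry_eq, map_sum]
  refine Finset.sum_congr rfl fun y hy => ?_
  rw [map_smul, qcone_sgl (by rw [Finset.card_erase_of_mem hy, σ.2]; omega)]

lemma bdry_qcone_sgl {s : Finset ℕ} (hs : s.card = m+2) (hx : x ∉ s) :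
    bdry (((-1:ℚ)^(pos s x)) • sgl (m+2) (insert x s))
      = sgl (m+1) s - ∑ y ∈ s, ((-1:ℚ)^(pos s y)) •
          (((-1:ℚ)^(pos (s.erase y) x)) • sgl (m+1) (insert x (s.erase y))) := by
  have hcard : (insert x s).card = (m+1) + 2 := by
    rw [Finset.card_insert_of_notMem hx, hs]
  rw [bdry_smul, bdry_sgl hcard, Finset.sum_insert hx, smul_add, Finset.smul_sum,
    sub_eq_add_neg]
  congr 1
  · rw [Finset.erase_insert hx, pos_insert_ge (lt_irrefl x), smul_smul, ← pow_add,
      ← two_mul, pow_mul]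
    norm_num
  · rw [← Finset.sum_neg_distrib]
    refine Finset.sum_congr rfl fun y hy => ?_
    have hxy : x ≠ y := fun h => hx (h ▸ hy)
    rw [Finset.erase_insert_of_ne hxy, smul_smul, smul_smul, ← pow_add, ← pow_add,
      ← neg_smul]
    congr 1
    apply negpow_anti
    rcases Nat.lt_trichotomy x y with h | h | h
    · have a1 := pos_insert_lt hx h
      have a2 : pos (s.erase y) x = pos s x := pos_erase_ge (by omega)
      omega
    · exact absurd h hxy
    · have a1 : pos (insert x s) y = pos s y := pos_insert_ge (by omega)
      have a2 := pos_erase_lt hy h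
      omega

lemma sum_sgl' (M : GChain ℚ m) :
    ∑ σ ∈ M.support, M σ • sgl m σ.1 = M := sum_sgl M

lemma bdry_qcone (x : ℕ) (U : GChain ℚ (m+1)) (hx : ∀ σ ∈ U.support, x ∉ σ.1) :
    bdry (qcone (m+1) x U) = U - qcone m x (bdry U) := by
  have hq : qcone (m+1) x U
      = ∑ σ ∈ U.support, U σ • (((-1:ℚ)^(pos σ.1 x)) • sgl (m+2) (insert x σ.1)) := by
    rw [qcone, Finsupp.linearCombination_apply]; rfl
  rw [hq, bdry_eq_bdryL, map_sum]
  have hterm : ∀ σ ∈ U.support,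
      bdryL ℚ (m+1) (U σ • (((-1:ℚ)^(pos σ.1 x)) • sgl (m+2) (insert x σ.1)))
        = U σ • sgl (m+1) σ.1
          - U σ • (∑ y ∈ σ.1, ((-1:ℚ)^(pos σ.1 y)) •
              (((-1:ℚ)^(pos (σ.1.erase y) x)) • sgl (m+1) (insert x (σ.1.erase y)))) := by
    intro σ hσ
    rw [map_smul, ← bdry_eq_bdryL, bdry_qcone_sgl σ.2 (hx σ hσ), smul_sub]
  rw [Finset.sum_congr rfl hterm, Finset.sum_sub_distrib]
  congr 1
  · exact sum_sgl' U
  · have hb : bdry U = ∑ σ ∈ U.support, U σ • simpBdry ℚ σ := rfl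
    rw [hb, map_sum]
    refine Finset.sum_congr rfl fun σ hσ => ?_
    rw [map_smul, qcone_simpBdry]

lemma exists_filling (X : GChain ℚ (m+1)) (hX : bdry X = 0) :
    ∃ M : GChain ℚ (m+2), bdry M = X := by
  set x := (X.support.sup fun σ => σ.1.sup id) + 1 with hxdef
  have hx : ∀ σ ∈ X.support, x ∉ σ.1 := by
    intro σ hσ hmem
    have h1 : σ.1.sup id ≤ X.support.sup (fun σ => σ.1.sup id) :=
      Finset.le_sup (f := fun σ : Simp (m+1) => σ.1.sup id) hσ
    have h2 : id x ≤ σ.1.sup id := Finset.le_sup hmem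
    simp only [id_eq] at h2
    omega
  exact ⟨qcone (m+1) x X, by rw [bdry_qcone x X hx, hX, map_zero, sub_zero]⟩

end QS

end Machinery6
section Machinery7

namespace QS

open Finset

variable {n : ℕ}

def fillSet {n : ℕ} (X : GChain ℚ n) : Set ℝ :=
  {r : ℝ | ∃ M : GChain ℚ (n + 1), bdry M = X ∧ ((fnorm M : ℚ) : ℝ) = r}

lemma qvol_eq (X : GChain ℚ n) : qvol X = sInf (fillSet X) := rfl

lemma fillSet_bddBelow (X : GChain ℚ n) : BddBelow (fillSet X) := by
  refine ⟨0, fun r hr => ?_⟩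
  obtain ⟨M, _, hM⟩ := hr
  rw [← hM]
  exact_mod_cast fnorm_nonneg M

lemma qvol_le {X : GChain ℚ n} {M : GChain ℚ (n+1)} (h : bdry M = X) :
    qvol X ≤ ((fnorm M : ℚ) : ℝ) :=
  csInf_le (fillSet_bddBelow X) ⟨M, h, rfl⟩

lemma le_qvol {X : GChain ℚ n} (hne : (fillSet X).Nonempty) {a : ℝ}
    (h : ∀ M : GChain ℚ (n+1), bdry M = X → a ≤ ((fnorm M:ℚ):ℝ)) :
    a ≤ qvol X := by
  refine le_csInf hne fun r hr => ?_
  obtain ⟨M, hM, hrr⟩ := hr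
  rw [← hrr]
  exact h M hM

lemma fillSet_nonempty {X : GChain ℚ (n+1)} (hX : bdry X = 0) :
    (fillSet X).Nonempty := by
  obtain ⟨M, hM⟩ := exists_filling X hX
  exact ⟨_, M, hM, rfl⟩

lemma qvol_nonneg {X : GChain ℚ (n+1)} (hX : bdry X = 0) : 0 ≤ qvol X :=
  le_qvol (fillSet_nonempty hX) (fun M _ => by exact_mod_cast fnorm_nonneg M)

def validPair (n : ℕ) (A B : Finset ℕ) (c c' : ℕ) : Prop :=
  (c ∈ A ∩ B ∨ A ∩ B = ∅) ∧ (c' ∈ A ∩ B ∨ A ∩ B = ∅) ∧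
    ((A ∩ B).card = n + 2 → c ≠ c')

lemma validPair_exists {A B : Finset ℕ} (hW : (A ∩ B).card ≤ n+2) :
    ∃ c c', validPair n A B c c' := by
  by_cases hAB : A ∩ B = ∅
  · exact ⟨0, 0, Or.inr hAB, Or.inr hAB, fun h => by rw [hAB] at h; simp at h⟩
  by_cases hcard : (A ∩ B).card = n + 2
  · have h2 : 1 < (A ∩ B).card := by omega
    obtain ⟨a, ha, b, hb, hab⟩ := Finset.one_lt_card.1 h2
    exact ⟨a, b, Or.inl ha, Or.inl hb, fun _ => hab⟩
  · have hne : (A ∩ B).Nonempty := Finset.nonempty_iff_ne_empty.2 hAB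
    exact ⟨(A∩B).min' hne, (A∩B).min' hne, Or.inl (Finset.min'_mem _ _),
      Or.inl (Finset.min'_mem _ _), fun h => absurd h hcard⟩

lemma validPair_left {A B : Finset ℕ} (hW : (A ∩ B).card ≤ n+2) {x : ℕ}
    (hx : x ∈ A ∩ B) : ∃ c', validPair n A B x c' := by
  by_cases hcard : (A ∩ B).card = n + 2
  · have h2 : 1 < (A ∩ B).card := by omega
    have : ∃ y ∈ A ∩ B, y ≠ x := by
      obtain ⟨a, ha, b, hb, hab⟩ := Finset.one_lt_card.1 h2
      by_cases hax : a = x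
      · exact ⟨b, hb, fun h => hab (hax.symm ▸ h ▸ rfl)⟩
      · exact ⟨a, ha, hax⟩
    obtain ⟨y, hy, hyx⟩ := this
    exact ⟨y, Or.inl hx, Or.inl hy, fun _ => fun h => hyx h.symm⟩
  · exact ⟨x, Or.inl hx, Or.inl hx, fun h => absurd h hcard⟩

lemma validPair_right {A B : Finset ℕ} (hW : (A ∩ B).card ≤ n+2) {x : ℕ}
    (hx : x ∈ A ∩ B) : ∃ c, validPair n A B c x := by
  obtain ⟨c', h1, h2, h3⟩ := validPair_left hW hx
  exact ⟨c', h2, h1, fun hc => (h3 hc).symm⟩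

theorem fnorm_ge {A B : Finset ℕ} (hW : (A ∩ B).card ≤ n+2)
    {X Y : GChain ℚ (n+1)} (hYc : bdry Y = 0) (hXc : bdry X = 0)
    (hX : suppOn A X) (hY : suppOn B Y)
    {c c' : ℕ} (hv : validPair n A B c c')
    (M : GChain ℚ (n+2)) (hM : bdry M = X + Y) :
    qvol X + qvol Y ≤ ((fnorm M : ℚ) : ℝ) := by
  obtain ⟨hc, hc', hcc'⟩ := hv
  have hbX : bdry (PC (n+2) A c M) = X := by
    rw [bdry_PC, hM, map_add, PC_of_suppOn hX,
      PC_cycle_zero hYc hY hW hc, add_zero]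
  have hbY : bdry (PC (n+2) B c' M) = Y := by
    have hc'B : c' ∈ B ∩ A ∨ B ∩ A = ∅ := by
      rw [Finset.inter_comm]; exact hc'
    rw [bdry_PC, hM, map_add, PC_of_suppOn hY,
      PC_cycle_zero hXc hX (by rw [Finset.inter_comm]; exact hW) hc'B, zero_add]
  have h1 : qvol X ≤ ((fnorm (PC (n+2) A c M) : ℚ) : ℝ) := qvol_le hbX
  have h2 : qvol Y ≤ ((fnorm (PC (n+2) B c' M) : ℚ) : ℝ) := qvol_le hbY
  have h3 := fnorm_PC_le (A := A) (c := c) M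
  have h4 := fnorm_PC_le (A := B) (c := c') M
  set F := M.support.filter (fun σ => pmapF (n+2) A c σ.1 ≠ 0) with hF
  set G := M.support.filter (fun σ => pmapF (n+2) B c' σ.1 ≠ 0) with hG
  have hdisj : Disjoint F G := by
    rw [Finset.disjoint_left]
    intro σ hσF hσG
    rw [hF, Finset.mem_filter] at hσF
    rw [hG, Finset.mem_filter] at hσG
    exact pmapF_not_both (by rw [σ.2]) hW hc hc' hcc' hσF.2 hσG.2
  have hsum : (∑ σ ∈ F, |M σ|) + (∑ σ ∈ G, |M σ|) ≤ fnorm M := by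
    rw [← Finset.sum_union hdisj, fnorm_eq_sum (le_refl M.support)]
    apply Finset.sum_le_sum_of_subset_of_nonneg
    · rw [Finset.union_subset_iff]
      exact ⟨Finset.filter_subset _ _, Finset.filter_subset _ _⟩
    · exact fun σ _ _ => abs_nonneg _
  have hq1 : (((fnorm (PC (n+2) A c M)) : ℚ) : ℝ) ≤ ((∑ σ ∈ F, |M σ| : ℚ) : ℝ) := by
    exact_mod_cast h3
  have hq2 : (((fnorm (PC (n+2) B c' M)) : ℚ) : ℝ) ≤ ((∑ σ ∈ G, |M σ| : ℚ) : ℝ) := by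
    exact_mod_cast h4
  have hq3 : ((∑ σ ∈ F, |M σ| : ℚ) : ℝ) + ((∑ σ ∈ G, |M σ| : ℚ) : ℝ)
      ≤ ((fnorm M : ℚ) : ℝ) := by
    exact_mod_cast hsum
  linarith

theorem qvol_additive {A B : Finset ℕ} (hW : (A ∩ B).card ≤ n+2)
    {X Y : GChain ℚ (n+1)} (hXc : bdry X = 0) (hYc : bdry Y = 0)
    (hX : suppOn A X) (hY : suppOn B Y) :
    qvol (X + Y) = qvol X + qvol Y := by
  obtain ⟨c, c', hv⟩ := validPair_exists (n := n) hW
  have hXY : bdry (X+Y) = 0 := by rw [bdry_add, hXc, hYc, add_zero]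
  apply le_antisymm
  · have key : ∀ r ∈ fillSet X, ∀ t ∈ fillSet Y, qvol (X+Y) ≤ r + t := by
      rintro r ⟨MX, hMX, rfl⟩ t ⟨MY, hMY, rfl⟩
      refine le_trans (qvol_le (M := MX + MY) (by rw [bdry_add, hMX, hMY])) ?_
      exact_mod_cast fnorm_add_le MX MY
    have h1 : ∀ r ∈ fillSet X, qvol (X+Y) - r ≤ qvol Y := by
      intro r hr
      refine le_csInf (fillSet_nonempty hYc) fun t ht => ?_
      linarith [key r hr t ht]
    have h2 : qvol (X+Y) - qvol Y ≤ qvol X := by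
      refine le_csInf (fillSet_nonempty hXc) fun r hr => ?_
      linarith [h1 r hr]
    linarith
  · exact le_qvol (fillSet_nonempty hXY)
      (fun M hM => fnorm_ge hW hYc hXc hX hY hv M hM)

end QS

end Machinery7
section Machinery8

namespace QS

open Finset

variable {n : ℕ}

theorem supp_partition {A B : Finset ℕ} (hW : (A ∩ B).card ≤ n+2)
    {X Y : GChain ℚ (n+1)} (hXc : bdry X = 0) (hYc : bdry Y = 0)
    (hX : suppOn A X) (hY : suppOn B Y)
    {c c' : ℕ} (hv : validPair n A B c c')
    {M : GChain ℚ (n+2)} (hM : bdry M = X + Y)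
    (hT : ((fnorm M : ℚ) : ℝ) = qvol X + qvol Y) :
    ∀ σ ∈ M.support, pmapF (n+2) A c σ.1 ≠ 0 ∨ pmapF (n+2) B c' σ.1 ≠ 0 := by
  intro σ₀ hσ₀
  by_contra hcon
  push_neg at hcon
  obtain ⟨hz1, hz2⟩ := hcon
  obtain ⟨hc, hc', hcc'⟩ := hv
  have hbX : bdry (PC (n+2) A c M) = X := by
    rw [bdry_PC, hM, map_add, PC_of_suppOn hX,
      PC_cycle_zero hYc hY hW hc, add_zero]
  have hbY : bdry (PC (n+2) B c' M) = Y := by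
    have hc'B : c' ∈ B ∩ A ∨ B ∩ A = ∅ := by
      rw [Finset.inter_comm]; exact hc'
    rw [bdry_PC, hM, map_add, PC_of_suppOn hY,
      PC_cycle_zero hXc hX (by rw [Finset.inter_comm]; exact hW) hc'B, zero_add]
  have h1 : qvol X ≤ ((fnorm (PC (n+2) A c M) : ℚ) : ℝ) := qvol_le hbX
  have h2 : qvol Y ≤ ((fnorm (PC (n+2) B c' M) : ℚ) : ℝ) := qvol_le hbY
  have h3 := fnorm_PC_le (A := A) (c := c) M
  have h4 := fnorm_PC_le (A := B) (c := c') M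
  set F := M.support.filter (fun σ => pmapF (n+2) A c σ.1 ≠ 0) with hF
  set G := M.support.filter (fun σ => pmapF (n+2) B c' σ.1 ≠ 0) with hG
  have hdisj : Disjoint F G := by
    rw [Finset.disjoint_left]
    intro σ hσF hσG
    rw [hF, Finset.mem_filter] at hσF
    rw [hG, Finset.mem_filter] at hσG
    exact pmapF_not_both (by rw [σ.2]) hW hc hc' hcc' hσF.2 hσG.2
  have hσ₀FG : σ₀ ∉ F ∪ G := by
    rw [hF, hG]
    simp only [Finset.mem_union, Finset.mem_filter, not_or, not_and, not_not]
    exact ⟨fun _ => hz1, fun _ => hz2⟩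
  have habs : 0 < |M σ₀| := abs_pos.2 (Finsupp.mem_support_iff.1 hσ₀)
  have hsub : insert σ₀ (F ∪ G) ⊆ M.support := by
    rw [Finset.insert_subset_iff, Finset.union_subset_iff]
    exact ⟨hσ₀, Finset.filter_subset _ _, Finset.filter_subset _ _⟩
  have hsum : |M σ₀| + ((∑ σ ∈ F, |M σ|) + (∑ σ ∈ G, |M σ|)) ≤ fnorm M := by
    have hle : ∑ σ ∈ insert σ₀ (F ∪ G), |M σ| ≤ fnorm M := by
      rw [fnorm_eq_sum (le_refl M.support)]
      exact Finset.sum_le_sum_of_subset_of_nonneg hsub fun σ _ _ => abs_nonneg _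
    rw [Finset.sum_insert hσ₀FG, Finset.sum_union hdisj] at hle
    exact hle
  have hq1 : (((fnorm (PC (n+2) A c M)) : ℚ) : ℝ) ≤ ((∑ σ ∈ F, |M σ| : ℚ) : ℝ) := by
    exact_mod_cast h3
  have hq2 : (((fnorm (PC (n+2) B c' M)) : ℚ) : ℝ) ≤ ((∑ σ ∈ G, |M σ| : ℚ) : ℝ) := by
    exact_mod_cast h4
  have hq3 : ((|M σ₀| : ℚ) : ℝ) + (((∑ σ ∈ F, |M σ| : ℚ) : ℝ) + ((∑ σ ∈ G, |M σ| : ℚ) : ℝ))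
      ≤ ((fnorm M : ℚ) : ℝ) := by
    exact_mod_cast hsum
  have hq4 : (0:ℝ) < ((|M σ₀| : ℚ) : ℝ) := by exact_mod_cast habs
  linarith

theorem classify {A B : Finset ℕ} (hn : 1 ≤ n) (hW : (A ∩ B).card ≤ n+2)
    {M : GChain ℚ (n+2)}
    (hvert : ∀ σ ∈ M.support, σ.1 ⊆ A ∪ B)
    (HP : ∀ c c', validPair n A B c c' →
      ∀ σ ∈ M.support, pmapF (n+2) A c σ.1 ≠ 0 ∨ pmapF (n+2) B c' σ.1 ≠ 0) :
    ∀ σ ∈ M.support,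
      (σ.1 ⊆ A ∨ ((σ.1 \ A).card = 1 ∧ σ.1 ∩ (A ∩ B) = ∅)) ∨
      (σ.1 ⊆ B ∨ ((σ.1 \ B).card = 1 ∧ σ.1 ∩ (A ∩ B) = ∅)) := by
  intro σ hσ
  have hcard : σ.1.card = n + 3 := by rw [σ.2]
  by_cases hA : σ.1 ⊆ A
  · exact Or.inl (Or.inl hA)
  by_cases hB : σ.1 ⊆ B
  · exact Or.inr (Or.inl hB)
  have noA : ∀ x ∈ A ∩ B, x ∈ σ.1 → pmapF (n+2) A x σ.1 ≠ 0 → False := by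
    intro x hxW hxσ h
    rcases pmapF_nonzero_char (by omega) h with h0 | ⟨v, hv, hcnd⟩
    · exact hA h0
    · rcases hcnd with h' | h'
      · exact h' hxσ
      · exact (sdiff_single_mem hv).2 (h' ▸ (Finset.mem_inter.1 hxW).1)
  have noB : ∀ x ∈ A ∩ B, x ∈ σ.1 → pmapF (n+2) B x σ.1 ≠ 0 → False := by
    intro x hxW hxσ h
    rcases pmapF_nonzero_char (by omega) h with h0 | ⟨v, hv, hcnd⟩
    · exact hB h0
    · rcases hcnd with h' | h'
      · exact h' hxσ
      · exact (sdiff_single_mem hv).2 (h' ▸ (Finset.mem_inter.1 hxW).2)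
  have cardA : ∀ c : ℕ, pmapF (n+2) A c σ.1 ≠ 0 → (σ.1 \ A).card = 1 := by
    intro c h
    rcases pmapF_nonzero_char (by omega) h with h0 | ⟨v, hv, _⟩
    · exact absurd h0 hA
    · rw [hv]; exact Finset.card_singleton v
  have cardB : ∀ c : ℕ, pmapF (n+2) B c σ.1 ≠ 0 → (σ.1 \ B).card = 1 := by
    intro c h
    rcases pmapF_nonzero_char (by omega) h with h0 | ⟨v, hv, _⟩
    · exact absurd h0 hB
    · rw [hv]; exact Finset.card_singleton v
  have hone : (σ.1 \ A).card = 1 ∨ (σ.1 \ B).card = 1 := by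
    obtain ⟨c, c', hv⟩ := validPair_exists (n := n) hW
    rcases HP c c' hv σ hσ with h | h
    · exact Or.inl (cardA _ h)
    · exact Or.inr (cardB _ h)
  have hdisjAB : Disjoint (σ.1 \ A) (σ.1 \ B) := by
    rw [Finset.disjoint_left]
    intro x h1 h2
    rcases Finset.mem_union.1 (hvert σ hσ (Finset.mem_sdiff.1 h1).1) with h | h
    · exact (Finset.mem_sdiff.1 h1).2 h
    · exact (Finset.mem_sdiff.1 h2).2 h
  have hcount : (σ.1 ∩ (A ∩ B)).card + ((σ.1 \ A).card + (σ.1 \ B).card) = n + 3 := by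
    have hdec : σ.1 = (σ.1 ∩ (A ∩ B)) ∪ ((σ.1 \ A) ∪ (σ.1 \ B)) := by
      ext x
      simp only [Finset.mem_union, Finset.mem_inter, Finset.mem_sdiff]
      constructor
      · intro hx
        by_cases hxA : x ∈ A <;> by_cases hxB : x ∈ B
        · exact Or.inl ⟨hx, hxA, hxB⟩
        · exact Or.inr (Or.inr ⟨hx, hxB⟩)
        · exact Or.inr (Or.inl ⟨hx, hxA⟩)
        · rcases Finset.mem_union.1 (hvert σ hσ hx) with h | h
          · exact absurd h hxA
          · exact absurd h hxB
      · intro hx; tauto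
    have hd2 : Disjoint (σ.1 ∩ (A ∩ B)) ((σ.1 \ A) ∪ (σ.1 \ B)) := by
      rw [Finset.disjoint_left]
      intro x h1 h2
      obtain ⟨hx1, hx23⟩ := Finset.mem_inter.1 h1
      obtain ⟨hx2, hx3⟩ := Finset.mem_inter.1 hx23
      rcases Finset.mem_union.1 h2 with h | h
      · exact (Finset.mem_sdiff.1 h).2 hx2
      · exact (Finset.mem_sdiff.1 h).2 hx3
    have hc2 : σ.1.card = (σ.1 ∩ (A ∩ B)).card + ((σ.1 \ A).card + (σ.1 \ B).card) := by
      conv_lhs => rw [hdec]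
      rw [Finset.card_union_of_disjoint hd2, Finset.card_union_of_disjoint hdisjAB]
    omega
  have hnotboth : ¬ ((σ.1 \ A).card = 1 ∧ (σ.1 \ B).card = 1) := by
    rintro ⟨hα, hβ⟩
    have h2 : 1 < (σ.1 ∩ (A ∩ B)).card := by omega
    obtain ⟨a, ha, b, hb, hab⟩ := Finset.one_lt_card.1 h2
    obtain ⟨haσ, haW⟩ := Finset.mem_inter.1 ha
    obtain ⟨hbσ, hbW⟩ := Finset.mem_inter.1 hb
    have hvab : validPair n A B a b := ⟨Or.inl haW, Or.inl hbW, fun _ => hab⟩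
    rcases HP a b hvab σ hσ with h | h
    · exact noA a haW haσ h
    · exact noB b hbW hbσ h
  rcases hone with hα | hβ
  · refine Or.inl (Or.inr ⟨hα, ?_⟩)
    rw [Finset.eq_empty_iff_forall_notMem]
    intro x hx
    obtain ⟨hxσ, hxW⟩ := Finset.mem_inter.1 hx
    obtain ⟨c', hvp⟩ := validPair_left (n := n) hW hxW
    rcases HP x c' hvp σ hσ with h | h
    · exact noA x hxW hxσ h
    · exact hnotboth ⟨hα, cardB _ h⟩
  · refine Or.inr (Or.inr ⟨hβ, ?_⟩)
    rw [Finset.eq_empty_iff_forall_notMem]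
    intro x hx
    obtain ⟨hxσ, hxW⟩ := Finset.mem_inter.1 hx
    obtain ⟨c, hvp⟩ := validPair_right (n := n) hW hxW
    rcases HP c x hvp σ hσ with h | h
    · exact hnotboth ⟨cardA _ h, hβ⟩
    · exact noB x hxW hxσ h

end QS

end Machinery8
section Machinery9

namespace QS

open Finset

variable {m : ℕ}

lemma fnorm_filter (p : Simp m → Prop) [DecidablePred p] (M : GChain ℚ m) :
    fnorm (Finsupp.filter p M) = ∑ σ ∈ M.support.filter p, |M σ| := by
  rw [fnorm_eq_sum (t := M.support.filter p) (by rw [Finsupp.support_filter])]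
  refine Finset.sum_congr rfl fun σ hσ => ?_
  rw [Finsupp.filter_apply, if_pos (Finset.mem_filter.1 hσ).2]

lemma fnorm_filter_add (p : Simp m → Prop) [DecidablePred p] (M : GChain ℚ m) :
    fnorm (Finsupp.filter p M) + fnorm (Finsupp.filter (fun σ => ¬ p σ) M)
      = fnorm M := by
  rw [fnorm_filter, fnorm_filter, fnorm_eq_sum (le_refl M.support)]
  exact Finset.sum_filter_add_sum_filter_not _ _ _

lemma bdry_support_faces (N : GChain ℚ (m+1)) :
    ∀ δ ∈ (bdry N).support, ∃ σ ∈ N.support, ∃ y ∈ σ.1, δ.1 = σ.1.erase y := by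
  intro δ hδ
  have hb : bdry N = N.sum fun σ k => k • simpBdry ℚ σ := rfl
  rw [hb] at hδ
  have h1 := Finsupp.support_sum hδ
  rw [Finset.mem_biUnion] at h1
  obtain ⟨σ, hσ, hδ2⟩ := h1
  refine ⟨σ, hσ, ?_⟩
  have hδ3 : δ ∈ (simpBdry ℚ σ).support := Finsupp.support_smul hδ2
  rw [simpBdry_eq] at hδ3
  have h2 := Finsupp.support_finset_sum hδ3
  rw [Finset.mem_biUnion] at h2
  obtain ⟨y, hy, hδ4⟩ := h2
  refine ⟨y, hy, ?_⟩
  have hδ5 := Finsupp.support_smul hδ4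
  have hcard : (σ.1.erase y).card = m + 1 := by
    rw [Finset.card_erase_of_mem hy, σ.2]; omega
  rw [sgl_pos hcard] at hδ5
  have := Finsupp.support_single_subset hδ5
  rw [Finset.mem_singleton] at this
  rw [this]

lemma PC_eq_zero {A : Finset ℕ} {c : ℕ} {N : GChain ℚ m}
    (h : ∀ σ ∈ N.support, pmapF m A c σ.1 = 0) : PC m A c N = 0 := by
  rw [PC_apply]
  apply Finset.sum_eq_zero
  intro σ hσ
  simp only []
  rw [h σ hσ, smul_zero]

end QS

end Machinery9
section Machinery10

namespace QS

open Finset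

variable {n : ℕ}

theorem taut_splits {A B : Finset ℕ} (hW : (A ∩ B).card ≤ n + 2)
    {X Y : GChain ℚ (n+1)} (hXc : bdry X = 0) (hYc : bdry Y = 0)
    (hX : suppOn A X) (hY : suppOn B Y) (hn : 1 ≤ n)
    (M : GChain ℚ (n + 2)) (hM : bdry M = X + Y) (hT : TautQ M) :
    ∃ MX MY : GChain ℚ (n + 2), M = MX + MY ∧ bdry MX = X ∧ bdry MY = Y ∧
      fnorm M = fnorm MX + fnorm MY ∧ TautQ MX ∧ TautQ MY := by
  classical
  set A' := A ∪ ((vert M) \ B) with hA'def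
  have hWeq : A' ∩ B = A ∩ B := by
    ext x
    simp only [hA'def, Finset.mem_inter, Finset.mem_union, Finset.mem_sdiff]
    tauto
  have hW' : (A' ∩ B).card ≤ n + 2 := by rw [hWeq]; exact hW
  have hX' : suppOn A' X := fun σ hσ => (hX σ hσ).trans Finset.subset_union_left
  have hvert : ∀ σ ∈ M.support, σ.1 ⊆ A' ∪ B := by
    intro σ hσ x hx
    have hxv : x ∈ vert M := by
      have h1 : σ.1 ≤ M.support.sup (fun s => (s : Finset ℕ)) :=
        Finset.le_sup hσ
      exact h1 hx
    by_cases hxB : x ∈ B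
    · exact Finset.mem_union_right _ hxB
    · exact Finset.mem_union_left _ (Finset.mem_union_right _
        (Finset.mem_sdiff.2 ⟨hxv, hxB⟩))
  have hT' : ((fnorm M : ℚ) : ℝ) = qvol X + qvol Y := by
    rw [TautQ] at hT
    rw [hT, hM, qvol_additive hW hXc hYc hX hY]
  have HP : ∀ c c', validPair n A' B c c' →
      ∀ σ ∈ M.support, pmapF (n+2) A' c σ.1 ≠ 0 ∨ pmapF (n+2) B c' σ.1 ≠ 0 :=
    fun c c' hv => supp_partition hW' hXc hYc hX' hY hv hM hT'
  have CL := classify hn hW' hvert HP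
  set p : Simp (n+2) → Prop :=
    fun σ => σ.1 ⊆ A' ∨ ((σ.1 \ A').card = 1 ∧ σ.1 ∩ (A' ∩ B) = ∅) with hpdef
  obtain ⟨c, c', hvp, hO1, hO2⟩ :
      ∃ c c', validPair n A' B c c' ∧
        (∀ σ ∈ M.support, p σ → pmapF (n+2) A' c σ.1 ≠ 0) ∧
        (∀ σ ∈ M.support, ¬ p σ → pmapF (n+2) A' c σ.1 = 0) := by
    by_cases hW0 : A' ∩ B = ∅
    · set z := (vert M).sup id + 1 with hz
      have hzfree : ∀ σ ∈ M.support, z ∉ σ.1 := by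
        intro σ hσ hmem
        have h1 : σ.1 ≤ M.support.sup (fun s => (s : Finset ℕ)) :=
          Finset.le_sup hσ
        have h2 : id z ≤ (vert M).sup id := Finset.le_sup (h1 hmem)
        simp only [id_eq] at h2
        omega
      refine ⟨z, z, ⟨Or.inr hW0, Or.inr hW0, fun h => ?_⟩, ?_, ?_⟩
      · rw [hW0] at h; simp at h
      · intro σ hσ hp
        rcases hp with hsub | ⟨h1, h2⟩
        · exact pmapF_nonzero_subset (by rw [σ.2]) hsub
        · obtain ⟨v, hv⟩ := Finset.card_eq_one.1 h1
          exact pmapF_nonzero_out (by rw [σ.2]) hv (hzfree σ hσ)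
      · intro σ hσ hnp
        by_contra h
        rcases pmapF_nonzero_char (by rw [σ.2]) h with h0 | ⟨v, hv, _⟩
        · exact hnp (Or.inl h0)
        · refine hnp (Or.inr ⟨by rw [hv]; exact Finset.card_singleton v, ?_⟩)
          rw [hW0, Finset.inter_empty]
    · obtain ⟨c, c', hvp⟩ := validPair_exists (n := n) hW'
      have hcW : c ∈ A' ∩ B := hvp.1.resolve_right hW0
      refine ⟨c, c', hvp, ?_, ?_⟩
      · intro σ hσ hp
        rcases hp with hsub | ⟨h1, h2⟩
        · exact pmapF_nonzero_subset (by rw [σ.2]) hsub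
        · obtain ⟨v, hv⟩ := Finset.card_eq_one.1 h1
          refine pmapF_nonzero_out (by rw [σ.2]) hv fun hcσ => ?_
          have hcm : c ∈ σ.1 ∩ (A' ∩ B) := Finset.mem_inter.2 ⟨hcσ, hcW⟩
          rw [h2] at hcm
          exact Finset.notMem_empty c hcm
      · intro σ hσ hnp
        by_contra h
        rcases pmapF_nonzero_char (by rw [σ.2]) h with h0 | ⟨v, hv, hcnd⟩
        · exact hnp (Or.inl h0)
        have h1 : (σ.1 \ A').card = 1 := by rw [hv]; exact Finset.card_singleton v
        have h2 : σ.1 ∩ (A' ∩ B) ≠ ∅ := fun he => hnp (Or.inr ⟨h1, he⟩)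
        have hq : σ.1 ⊆ B := by
          rcases CL σ hσ with hp' | hq'
          · exact absurd hp' hnp
          · rcases hq' with hh | ⟨_, he⟩
            · exact hh
            · exact absurd he h2
        have hsub : σ.1.erase v ⊆ A' ∩ B :=
          Finset.subset_inter (sdiff_single_erase_subset hv)
            ((Finset.erase_subset _ _).trans hq)
        have hcard2 : (σ.1.erase v).card = n + 2 := by
          rw [Finset.card_erase_of_mem (sdiff_single_mem hv).1, σ.2]; omega
        have heq : σ.1.erase v = A' ∩ B :=
          Finset.eq_of_subset_of_card_le hsub (by omega)
        have hcin : c ∈ σ.1.erase v := by rw [heq]; exact hcW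
        rcases hcnd with hh | hh
        · exact hh (Finset.mem_of_mem_erase hcin)
        · exact (Finset.ne_of_mem_erase hcin) hh
  obtain ⟨hc, hc', hcc'⟩ := hvp
  set MX := Finsupp.filter p M with hMXdef
  set MY := Finsupp.filter (fun σ => ¬ p σ) M with hMYdef
  have hsplit : MX + MY = M := Finsupp.filter_pos_add_filter_neg M p
  have hMXsupp : ∀ σ ∈ MX.support, p σ ∧ σ ∈ M.support := by
    intro σ hσ
    rw [hMXdef, Finsupp.support_filter, Finset.mem_filter] at hσ
    exact ⟨hσ.2, hσ.1⟩
  have hMYsupp : ∀ σ ∈ MY.support, ¬ p σ ∧ σ ∈ M.support := by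
    intro σ hσ
    rw [hMYdef, Finsupp.support_filter, Finset.mem_filter] at hσ
    exact ⟨hσ.2, hσ.1⟩
  have hPCMY : PC (n+2) A' c MY = 0 :=
    PC_eq_zero fun σ hσ => hO2 σ (hMYsupp σ hσ).2 (hMYsupp σ hσ).1
  have hPCM : PC (n+2) A' c MX = PC (n+2) A' c M := by
    rw [← hsplit, map_add, hPCMY, add_zero]
  have hbPCM : bdry (PC (n+2) A' c M) = X := by
    rw [bdry_PC, hM, map_add, PC_of_suppOn hX', PC_cycle_zero hYc hY hW' hc,
      add_zero]
  set D := bdry MX - X with hDdef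
  have hPCD : PC (n+1) A' c D = 0 := by
    rw [hDdef, map_sub, PC_of_suppOn (M := X) hX', ← bdry_PC, hPCM, hbPCM,
      sub_self]
  have hbb : bdry MX + bdry MY = X + Y := by rw [← bdry_add, hsplit, hM]
  have hD2 : D = Y - bdry MY := by
    rw [hDdef, sub_eq_sub_iff_add_eq_add, hbb]
    exact add_comm X Y
  have hS1 : ∀ δ ∈ D.support,
      δ.1 ⊆ A' ∨ (∃ v, δ.1 \ A' = {v} ∧ δ.1 ∩ (A' ∩ B) = ∅) := by
    intro δ hδ
    have hδ' : δ ∈ (bdry MX - X).support := by rw [← hDdef]; exact hδ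
    have hδ2 := Finsupp.support_sub hδ'
    rcases Finset.mem_union.1 hδ2 with hδ3 | hδ3
    · obtain ⟨σ, hσ, y, hy, hface⟩ := bdry_support_faces MX δ hδ3
      obtain ⟨hpσ, hσM⟩ := hMXsupp σ hσ
      rcases hpσ with hsub | ⟨h1, h2⟩
      · refine Or.inl ?_
        rw [hface]
        exact (Finset.erase_subset _ _).trans hsub
      · obtain ⟨v, hv⟩ := Finset.card_eq_one.1 h1
        by_cases hyv : y = v
        · subst hyv
          refine Or.inl ?_
          rw [hface]
          exact sdiff_single_erase_subset hv
        · refine Or.inr ⟨v, ?_, ?_⟩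
          · rw [hface, sdiff_erase_comm, hv,
              Finset.erase_eq_of_notMem (by simp [hyv])]
          · rw [Finset.eq_empty_iff_forall_notMem]
            intro x hx
            obtain ⟨hx1, hx2⟩ := Finset.mem_inter.1 hx
            rw [hface] at hx1
            have hmem : x ∈ σ.1 ∩ (A' ∩ B) :=
              Finset.mem_inter.2 ⟨Finset.mem_of_mem_erase hx1, hx2⟩
            rw [h2] at hmem
            exact Finset.notMem_empty x hmem
    · exact Or.inl (hX' δ hδ3)
  have hS3 : ∀ δ ∈ D.support,
      δ.1 ⊆ B ∨ (∃ v, δ.1 \ B = {v} ∧ δ.1 ∩ (A' ∩ B) = ∅) := by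
    intro δ hδ
    have hδ' : δ ∈ (Y - bdry MY).support := by rw [← hD2]; exact hδ
    have hδ2 := Finsupp.support_sub hδ'
    rcases Finset.mem_union.1 hδ2 with hδ3 | hδ3
    · exact Or.inl (hY δ hδ3)
    · obtain ⟨σ, hσ, y, hy, hface⟩ := bdry_support_faces MY δ hδ3
      obtain ⟨hnpσ, hσM⟩ := hMYsupp σ hσ
      have hqσ : σ.1 ⊆ B ∨ ((σ.1 \ B).card = 1 ∧ σ.1 ∩ (A' ∩ B) = ∅) := by
        rcases CL σ hσM with hp' | hq'
        · exact absurd hp' hnpσ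
        · exact hq'
      rcases hqσ with hsub | ⟨h1, h2⟩
      · refine Or.inl ?_
        rw [hface]
        exact (Finset.erase_subset _ _).trans hsub
      · obtain ⟨v, hv⟩ := Finset.card_eq_one.1 h1
        by_cases hyv : y = v
        · subst hyv
          refine Or.inl ?_
          rw [hface]
          exact sdiff_single_erase_subset hv
        · refine Or.inr ⟨v, ?_, ?_⟩
          · rw [hface, sdiff_erase_comm, hv,
              Finset.erase_eq_of_notMem (by simp [hyv])]
          · rw [Finset.eq_empty_iff_forall_notMem]
            intro x hx
            obtain ⟨hx1, hx2⟩ := Finset.mem_inter.1 hx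
            rw [hface] at hx1
            have hmem : x ∈ σ.1 ∩ (A' ∩ B) :=
              Finset.mem_inter.2 ⟨Finset.mem_of_mem_erase hx1, hx2⟩
            rw [h2] at hmem
            exact Finset.notMem_empty x hmem
  have hS4 : suppOn A' D := by
    intro δ hδ
    rcases hS1 δ hδ with h | ⟨v, hv, hWe⟩
    · exact h
    exfalso
    rcases hS3 δ hδ with hB2 | ⟨v', hv', _⟩
    · have hsub : δ.1.erase v ⊆ δ.1 ∩ (A' ∩ B) := by
        intro x hx
        exact Finset.mem_inter.2 ⟨Finset.mem_of_mem_erase hx, Finset.mem_inter.2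
          ⟨sdiff_single_erase_subset hv hx, hB2 (Finset.mem_of_mem_erase hx)⟩⟩
      rw [hWe] at hsub
      have hcard : (δ.1.erase v).card = n + 1 := by
        rw [Finset.card_erase_of_mem (sdiff_single_mem hv).1, δ.2]; omega
      have hle := Finset.card_le_card hsub
      rw [hcard, Finset.card_empty] at hle
      omega
    · have hsub : (δ.1.erase v).erase v' ⊆ δ.1 ∩ (A' ∩ B) := by
        intro x hx
        have hx1 : x ∈ δ.1 :=
          Finset.mem_of_mem_erase (Finset.mem_of_mem_erase hx)
        have hxv : x ≠ v := Finset.ne_of_mem_erase (Finset.mem_of_mem_erase hx)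
        have hxv' : x ≠ v' := Finset.ne_of_mem_erase hx
        have hxA : x ∈ A' := by
          by_contra hxA
          have hmem : x ∈ δ.1 \ A' := Finset.mem_sdiff.2 ⟨hx1, hxA⟩
          rw [hv] at hmem
          exact hxv (Finset.mem_singleton.1 hmem)
        have hxB : x ∈ B := by
          by_contra hxB
          have hmem : x ∈ δ.1 \ B := Finset.mem_sdiff.2 ⟨hx1, hxB⟩
          rw [hv'] at hmem
          exact hxv' (Finset.mem_singleton.1 hmem)
        exact Finset.mem_inter.2 ⟨hx1, Finset.mem_inter.2 ⟨hxA, hxB⟩⟩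
      rw [hWe] at hsub
      have h1 := Finset.pred_card_le_card_erase (s := δ.1) (a := v)
      have h2 := Finset.pred_card_le_card_erase (s := δ.1.erase v) (a := v')
      have h3 := Finset.card_le_card hsub
      have h4 := δ.2
      rw [Finset.card_empty] at h3
      omega
  have hD0 : D = 0 := by
    rw [← PC_of_suppOn (c := c) hS4, hPCD]
  have hbMX : bdry MX = X := by
    have hsub0 : bdry MX - X = 0 := by rw [← hDdef]; exact hD0
    exact eq_of_sub_eq_zero hsub0
  have hbMY : bdry MY = Y := by
    have hsub0 : Y - bdry MY = 0 := by rw [← hD2]; exact hD0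
    exact (eq_of_sub_eq_zero hsub0).symm
  have hnorm : fnorm M = fnorm MX + fnorm MY := (fnorm_filter_add p M).symm
  have hq1 : qvol X ≤ ((fnorm MX : ℚ) : ℝ) := qvol_le hbMX
  have hq2 : qvol Y ≤ ((fnorm MY : ℚ) : ℝ) := qvol_le hbMY
  have hcast : ((fnorm M : ℚ) : ℝ) = ((fnorm MX : ℚ) : ℝ) + ((fnorm MY : ℚ) : ℝ) := by
    exact_mod_cast hnorm
  have he1 : ((fnorm MX : ℚ) : ℝ) = qvol X := by linarith
  have he2 : ((fnorm MY : ℚ) : ℝ) = qvol Y := by linarith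
  exact ⟨MX, MY, hsplit.symm, hbMX, hbMY, hnorm,
    by rw [TautQ, hbMX]; exact he1, by rw [TautQ, hbMY]; exact he2⟩

end QS

end Machinery10

/-- `Qvol` is additive under almost disjoint union, and for
cycles of dimension `≥ 2` every taut rational filling splits. -/
theorem qvol_add_and_taut_splits {n : ℕ} (A B : Finset ℕ)
    (h : (A ∩ B).card ≤ n + 2)
    (X Y : GChain ℚ (n + 1)) (hXc : bdry X = 0) (hYc : bdry Y = 0)
    (hX : suppOn A X) (hY : suppOn B Y) :
    qvol (X + Y) = qvol X + qvol Y ∧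
      (1 ≤ n → ∀ M : GChain ℚ (n + 2), bdry M = X + Y → TautQ M →
        ∃ MX MY : GChain ℚ (n + 2), M = MX + MY ∧ bdry MX = X ∧ bdry MY = Y ∧
          fnorm M = fnorm MX + fnorm MY ∧ TautQ MX ∧ TautQ MY) := by
  constructor
  · exact QS.qvol_additive h hXc hYc hX hY
  · intro hn M hM hT
    exact QS.taut_splits h hXc hYc hX hY hn M hM hT
end
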